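/- Let f ∈ Id(S) be nonzero and write f = Σᵢ αᵢaᵢsᵢbᵢ with sᵢ ∈ S ⊆ k⟨X⟩⊗k⟨Y⟩. If the pairwise equal maximal words w = aᵢ s̄ᵢ bᵢ (attained for indices 1, …, l with l ≥ 2) satisfy that all compositions in S are trivial, then f admits another such representation in which either the number l of maximal terms decreases or the maximal word w decreases; consequently f̄ = as̄b for some s ∈ S, a, b ∈ N. -/

import Mathlib

/-- A monomial order: a well-founded strict total order compatible with multiplication. -/
def MonOrd {M : Type*} [Monoid M] (lt : M → M → Prop) : Prop :=
  IsStrictTotalOrder M lt ∧ WellFounded lt ∧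
    ∀ u v w₁ w₂ : M, lt u v → lt (w₁ * u * w₂) (w₁ * v * w₂)

/-- `m` is the leading word of `f` with respect to the order `lt`. -/
def IsLeadR {k M : Type*} [Semiring k] (lt : M → M → Prop)
    (f : MonoidAlgebra k M) (m : M) : Prop :=
  m ∈ f.coeff.support ∧ ∀ u ∈ f.coeff.support, u ≠ m → lt u m

/-- `f` is monic: its leading coefficient is `1`. -/
def MonicR {k M : Type*} [Semiring k] (lt : M → M → Prop) (f : MonoidAlgebra k M) : Prop :=
  ∃ m, IsLeadR lt f m ∧ f.coeff m = 1

/-- The monomial `m` viewed as an element of the monoid algebra. -/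
noncomputable def mono (k : Type*) {M : Type*} [Semiring k] [Monoid M] (m : M) :
    MonoidAlgebra k M := MonoidAlgebra.of k M m

/-- `h` is trivial modulo `(S, w)`: it is a linear combination `Σ αᵢ aᵢ sᵢ bᵢ`
with `sᵢ ∈ S` and leading words `aᵢ s̄ᵢ bᵢ < w`. -/
def TrivModR {k M : Type*} [Semiring k] [Monoid M] (lt : M → M → Prop)
    (S : Set (MonoidAlgebra k M)) (w : M) (h : MonoidAlgebra k M) : Prop :=
  ∃ (n : ℕ) (α : Fin n → k) (a b : Fin n → M) (s : Fin n → MonoidAlgebra k M),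
    (∀ i, s i ∈ S) ∧
    h = ∑ i, α i • (mono k (a i) * s i * mono k (b i)) ∧
    ∀ i, ∃ m, IsLeadR lt (s i) m ∧ lt (a i * m * b i) w

/-- Gröbner–Shirshov basis in a free associative algebra `k⟨Z⟩`:
all intersection and inclusion compositions are trivial. -/
def FIsGSB {k Z : Type*} [Ring k] (lt : FreeMonoid Z → FreeMonoid Z → Prop)
    (S : Set (MonoidAlgebra k (FreeMonoid Z))) : Prop :=
  (∀ s ∈ S, MonicR lt s) ∧
  ∀ f ∈ S, ∀ g ∈ S, ∀ mf mg : FreeMonoid Z, IsLeadR lt f mf → IsLeadR lt g mg →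
    ((∀ a b : FreeMonoid Z, mf * b = a * mg →
        (mf * b).length < mf.length + mg.length →
        TrivModR lt S (mf * b) (f * mono k b - mono k a * g)) ∧
     (∀ a b : FreeMonoid Z, mf = a * mg * b →
        TrivModR lt S mf (f - mono k a * g * mono k b)))

/-- the deg-lex order on words induced by an order on letters -/
def degLex {A : Type*} (ltA : A → A → Prop) (u v : FreeMonoid A) : Prop :=
  u.length < v.length ∨ (u.length = v.length ∧ List.Lex ltA u.toList v.toList)

/-- Normal words of `k⟨X⟩ ⊗ k⟨Y⟩`: the monoid `X* × Y*`
(whose multiplication is `(u^X u^Y)(v^X v^Y) = u^X v^X u^Y v^Y`). -/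
abbrev NW (X Y : Type*) := FreeMonoid X × FreeMonoid Y

/-- the (deg-)lex order on `N = X*Y*` built from orders on `X*` and `Y*`:
`u > v` iff `u^X > v^X` or (`u^X = v^X` and `u^Y > v^Y`). -/
def lexNW {X Y : Type*} (ltX : FreeMonoid X → FreeMonoid X → Prop)
    (ltY : FreeMonoid Y → FreeMonoid Y → Prop) (u v : NW X Y) : Prop :=
  ltX u.1 v.1 ∨ (u.1 = v.1 ∧ ltY u.2 v.2)

/-- All compositions `(f,g)_w = p` in `k⟨X⟩ ⊗ k⟨Y⟩`, where `mf, mg` are the leading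
words of `f, g`.  The cases are: 1.1 `X`-inclusion only, 1.2 `Y`-inclusion only,
1.3 `X,Y`-inclusion, 1.4 `X,Y`-skew-inclusion, 2.1 `X`-intersection only,
2.2 `Y`-intersection only, 2.3 `X,Y`-intersection, 2.4 `X,Y`-skew-intersection,
3.1 `X`-inclusion and `Y`-intersection, 3.2 `X`-intersection and `Y`-inclusion. -/
def IsComp {k X Y : Type*} [Ring k] (f g : MonoidAlgebra k (NW X Y))
    (mf mg : NW X Y) (p : MonoidAlgebra k (NW X Y)) (w : NW X Y) : Prop :=
  let e : NW X Y → MonoidAlgebra k (NW X Y) := fun m => mono k m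
  let fx := mf.1; let fy := mf.2; let gx := mg.1; let gy := mg.2
  -- 1.1 X-inclusion only
  (∃ (a b : FreeMonoid X) (c : FreeMonoid Y), fx = a * gx * b ∧
     ((w = (fx, fy * c * gy) ∧ p = f * e (1, c * gy) - e (a, fy * c) * g * e (b, 1)) ∨
      (w = (fx, gy * c * fy) ∧ p = e (1, gy * c) * f - e (a, 1) * g * e (b, c * fy)))) ∨
  -- 1.2 Y-inclusion only
  (∃ (a : FreeMonoid X) (c d : FreeMonoid Y), fy = c * gy * d ∧
     ((w = (fx * a * gx, fy) ∧ p = f * e (a * gx, 1) - e (fx * a, c) * g * e (1, d)) ∨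
      (w = (gx * a * fx, fy) ∧ p = e (gx * a, 1) * f - e (1, c) * g * e (a * fx, d)))) ∨
  -- 1.3 X,Y-inclusion
  (∃ (a b : FreeMonoid X) (c d : FreeMonoid Y), fx = a * gx * b ∧ fy = c * gy * d ∧
     w = (fx, fy) ∧ p = f - e (a, c) * g * e (b, d)) ∨
  -- 1.4 X,Y-skew-inclusion
  (∃ (a b : FreeMonoid X) (c d : FreeMonoid Y), fx = a * gx * b ∧ gy = c * fy * d ∧
     w = (fx, gy) ∧ p = e (1, c) * f * e (1, d) - e (a, 1) * g * e (b, 1)) ∨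
  -- 2.1 X-intersection only
  (∃ (a b : FreeMonoid X) (c : FreeMonoid Y), fx * a = b * gx ∧
     (fx * a).length < fx.length + gx.length ∧
     ((w = (fx * a, fy * c * gy) ∧ p = f * e (a, c * gy) - e (b, fy * c) * g) ∨
      (w = (fx * a, gy * c * fy) ∧
        p = e (1, gy * c) * f * e (a, 1) - e (b, 1) * g * e (1, c * fy)))) ∨
  -- 2.2 Y-intersection only
  (∃ (a : FreeMonoid X) (c d : FreeMonoid Y), fy * c = d * gy ∧
     (fy * c).length < fy.length + gy.length ∧
     ((w = (fx * a * gx, fy * c) ∧ p = f * e (a * gx, c) - e (fx * a, d) * g) ∨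
      (w = (gx * a * fx, fy * c) ∧
        p = e (gx * a, 1) * f * e (1, c) - e (1, d) * g * e (a * fx, 1)))) ∨
  -- 2.3 X,Y-intersection
  (∃ (a b : FreeMonoid X) (c d : FreeMonoid Y), fx * a = b * gx ∧ fy * c = d * gy ∧
     (fx * a).length < fx.length + gx.length ∧ (fy * c).length < fy.length + gy.length ∧
     w = (fx * a, fy * c) ∧ p = f * e (a, c) - e (b, d) * g) ∨
  -- 2.4 X,Y-skew-intersection
  (∃ (a b : FreeMonoid X) (c d : FreeMonoid Y), fx * a = b * gx ∧ c * fy = gy * d ∧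
     (fx * a).length < fx.length + gx.length ∧ (c * fy).length < fy.length + gy.length ∧
     w = (fx * a, c * fy) ∧ p = e (1, c) * f * e (a, 1) - e (b, 1) * g * e (1, d)) ∨
  -- 3.1 X-inclusion and Y-intersection
  (∃ (a b : FreeMonoid X) (c d : FreeMonoid Y), fx = a * gx * b ∧
     ((fy * c = d * gy ∧ (fy * c).length < fy.length + gy.length ∧
        w = (fx, fy * c) ∧ p = f * e (1, c) - e (a, d) * g * e (b, 1)) ∨
      (c * fy = gy * d ∧ (c * fy).length < fy.length + gy.length ∧
        w = (fx, c * fy) ∧ p = e (1, c) * f - e (a, 1) * g * e (b, d)))) ∨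
  -- 3.2 X-intersection and Y-inclusion
  (∃ (a b : FreeMonoid X) (c d : FreeMonoid Y), fx * a = b * gx ∧
     (fx * a).length < fx.length + gx.length ∧
     ((fy = c * gy * d ∧ w = (fx * a, fy) ∧ p = f * e (a, 1) - e (b, c) * g * e (1, d)) ∨
      (gy = c * fy * d ∧ w = (fx * a, gy) ∧ p = e (1, c) * f * e (a, d) - e (b, 1) * g)))

/-- Gröbner–Shirshov basis in `k⟨X⟩ ⊗ k⟨Y⟩`: a set of monic polynomials
all of whose compositions are trivial. -/
def IsGSB {k X Y : Type*} [Ring k] (lt : NW X Y → NW X Y → Prop)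
    (S : Set (MonoidAlgebra k (NW X Y))) : Prop :=
  (∀ s ∈ S, MonicR lt s) ∧
  ∀ f ∈ S, ∀ g ∈ S, ∀ (mf mg : NW X Y) (p : MonoidAlgebra k (NW X Y)) (w : NW X Y),
    IsLeadR lt f mf → IsLeadR lt g mg → IsComp f g mf mg p w → TrivModR lt S w p

/-- the abelianization map `γ : X* → [X]`, with `[X]` the free commutative monoid
on `X` realized as `Multiplicative (Multiset X)`. -/
def gam {X : Type*} (u : FreeMonoid X) : Multiplicative (Multiset X) :=
  Multiplicative.ofAdd (↑u.toList : Multiset X)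

/-- the order on `X*` lifted from a monomial order on `[X]`:
`u > v` iff `γ(u) > γ(v)`, or `γ(u) = γ(v)` and `u >_lex v`. -/
def liftOrd {X : Type*} [LinearOrder X]
    (ltC : Multiplicative (Multiset X) → Multiplicative (Multiset X) → Prop)
    (u v : FreeMonoid X) : Prop :=
  ltC (gam u) (gam v) ∨ (gam u = gam v ∧ List.Lex (· < ·) u.toList v.toList)

/-- `δ` on monomials: the weakly increasing word representing a commutative monomial. -/
noncomputable def dword {X : Type*} [LinearOrder X] (m : Multiplicative (Multiset X)) :
    FreeMonoid X :=
  FreeMonoid.ofList (Multiset.sort (Multiplicative.toAdd m) (· ≤ ·))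

/-- the lexicographic splitting `δ : k[X] → k⟨X⟩`. -/
noncomputable def deltaMap {k X : Type*} [Semiring k] [LinearOrder X]
    (f : MonoidAlgebra k (Multiplicative (Multiset X))) :
    MonoidAlgebra k (FreeMonoid X) :=
  MonoidAlgebra.mapDomain dword f

/-- the set `S₁ = {xᵢxⱼ - xⱼxᵢ : xᵢ > xⱼ}` of commutators in `k⟨X⟩`. -/
noncomputable def commSet (k X : Type*) [Ring k] [LinearOrder X] :
    Set (MonoidAlgebra k (FreeMonoid X)) :=
  {p | ∃ i j : X, j < i ∧
    p = mono k (FreeMonoid.of i * FreeMonoid.of j) - mono k (FreeMonoid.of j * FreeMonoid.of i)}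

/-- `U(m)`: commutative monomials in the variables strictly between the least and the
greatest variable occurring in `m`. -/
def UU {X : Type*} [LinearOrder X] (m : Multiplicative (Multiset X)) :
    Set (Multiplicative (Multiset X)) :=
  {u | ∀ y ∈ Multiplicative.toAdd u,
     (∃ z ∈ Multiplicative.toAdd m, z < y) ∧ (∃ z ∈ Multiplicative.toAdd m, y < z)}

/-- Normal words of `k[X] ⊗ k⟨Y⟩`: the monoid `[X]Y*`. -/
abbrev CW (X Y : Type*) := Multiplicative (Multiset X) × FreeMonoid Y

/-- the order on `[X]Y*`: compare the `Y`-part first, then the `[X]`-part. -/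
def cwOrd {X Y : Type*}
    (ltC : Multiplicative (Multiset X) → Multiplicative (Multiset X) → Prop)
    (ltY : FreeMonoid Y → FreeMonoid Y → Prop) (u v : CW X Y) : Prop :=
  ltY u.2 v.2 ∨ (u.2 = v.2 ∧ ltC u.1 v.1)

/-- the order on `X*Y*` lifted from the order on `[X]Y*`, breaking ties by `lex`
on the `X`-component. -/
def liftNW {X Y : Type*} [LinearOrder X]
    (ltC : Multiplicative (Multiset X) → Multiplicative (Multiset X) → Prop)
    (ltY : FreeMonoid Y → FreeMonoid Y → Prop) (u v : NW X Y) : Prop :=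
  cwOrd ltC ltY (gam u.1, u.2) (gam v.1, v.2) ∨
    ((gam u.1 = gam v.1 ∧ u.2 = v.2) ∧ List.Lex (· < ·) u.1.toList v.1.toList)

/-- `δ : k[X] ⊗ k⟨Y⟩ → k⟨X⟩ ⊗ k⟨Y⟩`, the lexicographic splitting extended by the
identity on `Y`-words. -/
noncomputable def deltaNW {k X Y : Type*} [Semiring k] [LinearOrder X]
    (f : MonoidAlgebra k (CW X Y)) : MonoidAlgebra k (NW X Y) :=
  MonoidAlgebra.mapDomain (fun m : CW X Y => ((dword m.1, m.2) : NW X Y)) f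

/-- Mikhalev–Zolotykh compositions in `k[X] ⊗ k⟨Y⟩`: inclusion `C₁`, overlap `C₂`
and external `C₃` compositions, where `mf`, `mg` are the leading words of `f`, `g`,
and `L = lcm(mf^X, mg^X)`. -/
def MZComp {k X Y : Type*} [Ring k] [DecidableEq X]
    (ltC : Multiplicative (Multiset X) → Multiplicative (Multiset X) → Prop)
    (f g : MonoidAlgebra k (CW X Y)) (mf mg : CW X Y)
    (p : MonoidAlgebra k (CW X Y)) (w : CW X Y) : Prop :=
  let e : CW X Y → MonoidAlgebra k (CW X Y) := fun m => mono k m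
  let fX := Multiplicative.toAdd mf.1; let gX := Multiplicative.toAdd mg.1
  let L : Multiset X := fX ∪ gX
  let Lf : Multiplicative (Multiset X) := Multiplicative.ofAdd (L - fX)
  let Lg : Multiplicative (Multiset X) := Multiplicative.ofAdd (L - gX)
  -- C₁ : inclusion
  (∃ c d : FreeMonoid Y, mf.2 = c * mg.2 * d ∧
     (mf.2 = mg.2 → (mg.1 = mf.1 ∨ ltC mg.1 mf.1)) ∧ (mg.2 = 1 → c = 1) ∧
     w = (Multiplicative.ofAdd L, mf.2) ∧
     p = e (Lf, 1) * f - e (Lg, c) * g * e (1, d)) ∨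
  -- C₂ : overlap
  (∃ c d c₀ : FreeMonoid Y, c₀ ≠ 1 ∧ mf.2 = c * c₀ ∧ mg.2 = c₀ * d ∧
     w = (Multiplicative.ofAdd L, mf.2 * d) ∧
     p = e (Lf, 1) * f * e (1, d) - e (Lg, c) * g) ∨
  -- C₃ : external
  (∃ c₀ : FreeMonoid Y, fX ∩ gX ≠ 0 ∧ mf.2 ≠ 1 ∧ mg.2 ≠ 1 ∧
     w = (Multiplicative.ofAdd L, mf.2 * c₀ * mg.2) ∧
     p = e (Lf, 1) * f * e (1, c₀ * mg.2) - e (Lg, mf.2 * c₀) * g)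

/-- Gröbner–Shirshov basis in `k[X] ⊗ k⟨Y⟩` in the sense of Mikhalev–Zolotykh. -/
def MZGSB {k X Y : Type*} [Ring k] [DecidableEq X]
    (ltC : Multiplicative (Multiset X) → Multiplicative (Multiset X) → Prop)
    (ltY : FreeMonoid Y → FreeMonoid Y → Prop)
    (S : Set (MonoidAlgebra k (CW X Y))) : Prop :=
  (∀ s ∈ S, MonicR (cwOrd ltC ltY) s) ∧
  ∀ f ∈ S, ∀ g ∈ S, ∀ (mf mg : CW X Y) (p : MonoidAlgebra k (CW X Y)) (w : CW X Y),
    IsLeadR (cwOrd ltC ltY) f mf → IsLeadR (cwOrd ltC ltY) g mg →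
    MZComp ltC f g mf mg p w → TrivModR (cwOrd ltC ltY) S w p

section Helpers

variable {k : Type*} [CommRing k] {M : Type*} [Monoid M]

theorem mono_mul (x y : M) : mono k x * mono k y = mono k (x * y) :=
  (map_mul (MonoidAlgebra.of k M) x y).symm

theorem expand_ctx (a b : M) (h : MonoidAlgebra k M) :
    mono k a * h * mono k b = MonoidAlgebra.mapDomain (fun v => a * v * b) h := by
  induction h using MonoidAlgebra.induction_linear with
  | zero => simp [MonoidAlgebra.mapDomain_zero]
  | add f g hf hg => rw [mul_add, add_mul, MonoidAlgebra.mapDomain_add, hf, hg]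
  | single x r =>
      rw [MonoidAlgebra.mapDomain_single]
      simp only [mono, MonoidAlgebra.of_apply, MonoidAlgebra.single_mul_single, one_mul, mul_one]

theorem ctx_apply {a b : M} (hinj : Function.Injective fun v : M => a * v * b)
    (h : MonoidAlgebra k M) (v : M) : (mono k a * h * mono k b).coeff (a * v * b) = h.coeff v := by
  rw [expand_ctx]; exact Finsupp.mapDomain_apply hinj h.coeff v

theorem ctx_support [DecidableEq M] (a b : M) (h : MonoidAlgebra k M) :
    (mono k a * h * mono k b).coeff.support ⊆ h.coeff.support.image (fun v => a * v * b) := by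
  rw [expand_ctx]; exact Finsupp.mapDomain_support

theorem ctx_sum (a b : M) (h : MonoidAlgebra k M) :
    mono k a * h * mono k b = ∑ v ∈ h.coeff.support, h.coeff v • mono k (a * v * b) := by
  rw [expand_ctx, MonoidAlgebra.mapDomain, Finsupp.mapDomain, Finsupp.sum, MonoidAlgebra.ofCoeff_sum]
  refine Finset.sum_congr rfl fun v _ => ?_
  rw [mono, MonoidAlgebra.of_apply, MonoidAlgebra.smul_single, smul_eq_mul, mul_one,
    MonoidAlgebra.ofCoeff_single]

theorem isLeadR_ctx {lt : M → M → Prop}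
    (hmono : ∀ u v w₁ w₂ : M, lt u v → lt (w₁ * u * w₂) (w₁ * v * w₂))
    {a b : M} (hinj : Function.Injective fun v : M => a * v * b)
    {h : MonoidAlgebra k M} {mh : M} (hl : IsLeadR lt h mh) :
    IsLeadR lt (mono k a * h * mono k b) (a * mh * b) := by
  classical
  constructor
  · rw [Finsupp.mem_support_iff, ctx_apply hinj]
    exact Finsupp.mem_support_iff.1 hl.1
  · intro u hu hne
    obtain ⟨v, hv, rfl⟩ := Finset.mem_image.1 (ctx_support a b h hu)
    exact hmono _ _ _ _ (hl.2 v hv (fun e => hne (by rw [e])))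

theorem TrivModR.neg {lt : M → M → Prop} {S : Set (MonoidAlgebra k M)} {w : M}
    {h : MonoidAlgebra k M} (H : TrivModR lt S w h) : TrivModR lt S w (-h) := by
  obtain ⟨n, α, a, b, s, hS, hEq, hlt⟩ := H
  exact ⟨n, fun i => -α i, a, b, s, hS, by rw [hEq, ← Finset.sum_neg_distrib]; simp [neg_smul], hlt⟩

theorem TrivModR.smul {lt : M → M → Prop} {S : Set (MonoidAlgebra k M)} {w : M}
    {h : MonoidAlgebra k M} (r : k) (H : TrivModR lt S w h) : TrivModR lt S w (r • h) := by
  obtain ⟨n, α, a, b, s, hS, hEq, hlt⟩ := H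
  exact ⟨n, fun i => r * α i, a, b, s, hS, by rw [hEq, Finset.smul_sum]; simp [smul_smul], hlt⟩

theorem TrivModR.add {lt : M → M → Prop} {S : Set (MonoidAlgebra k M)} {w : M}
    {h₁ h₂ : MonoidAlgebra k M} (H₁ : TrivModR lt S w h₁) (H₂ : TrivModR lt S w h₂) :
    TrivModR lt S w (h₁ + h₂) := by
  obtain ⟨n₁, α₁, a₁, b₁, s₁, hS₁, hE₁, hl₁⟩ := H₁
  obtain ⟨n₂, α₂, a₂, b₂, s₂, hS₂, hE₂, hl₂⟩ := H₂
  refine ⟨n₁ + n₂, Fin.addCases α₁ α₂, Fin.addCases a₁ a₂, Fin.addCases b₁ b₂,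
    Fin.addCases s₁ s₂, ?_, ?_, ?_⟩
  · refine Fin.addCases ?_ ?_ <;> intro i <;>
      simp only [Fin.addCases_left, Fin.addCases_right] <;> [exact hS₁ i; exact hS₂ i]
  · rw [hE₁, hE₂, Fin.sum_univ_add]
    simp only [Fin.addCases_left, Fin.addCases_right]
  · refine Fin.addCases ?_ ?_ <;> intro i <;>
      simp only [Fin.addCases_left, Fin.addCases_right] <;> [exact hl₁ i; exact hl₂ i]

theorem TrivModR.sub {lt : M → M → Prop} {S : Set (MonoidAlgebra k M)} {w : M}
    {h₁ h₂ : MonoidAlgebra k M} (H₁ : TrivModR lt S w h₁) (H₂ : TrivModR lt S w h₂) :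
    TrivModR lt S w (h₁ - h₂) := by
  rw [sub_eq_add_neg]; exact H₁.add H₂.neg

theorem trivModR_sum {lt : M → M → Prop} {S : Set (MonoidAlgebra k M)} {w : M}
    {ι : Type*} (F : Finset ι) (κ : ι → k) (A B : ι → M) (σ : ι → MonoidAlgebra k M)
    (hσ : ∀ i ∈ F, σ i ∈ S)
    (hld : ∀ i ∈ F, ∃ m, IsLeadR lt (σ i) m ∧ lt (A i * m * B i) w) :
    TrivModR lt S w (∑ i ∈ F, κ i • (mono k (A i) * σ i * mono k (B i))) := by
  classical
  refine ⟨F.card, fun j => κ (F.equivFin.symm j), fun j => A (F.equivFin.symm j),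
    fun j => B (F.equivFin.symm j), fun j => σ (F.equivFin.symm j),
    fun j => hσ _ (F.equivFin.symm j).2, ?_, fun j => hld _ (F.equivFin.symm j).2⟩
  rw [← Finset.sum_coe_sort F (fun i => κ i • (mono k (A i) * σ i * mono k (B i)))]
  exact (Equiv.sum_comp F.equivFin.symm
    (fun x : {x // x ∈ F} => κ x • (mono k (A x) * σ x * mono k (B x)))).symm

theorem TrivModR.lift {lt : M → M → Prop} {S : Set (MonoidAlgebra k M)}
    (hmono : ∀ u v w₁ w₂ : M, lt u v → lt (w₁ * u * w₂) (w₁ * v * w₂))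
    {w₀ : M} {h : MonoidAlgebra k M} (H : TrivModR lt S w₀ h) (A B : M) :
    TrivModR lt S (A * w₀ * B) (mono k A * h * mono k B) := by
  obtain ⟨n, α, a, b, s, hS, hE, hl⟩ := H
  refine ⟨n, α, fun i => A * a i, fun i => b i * B, s, hS, ?_, ?_⟩
  · rw [hE, Finset.mul_sum, Finset.sum_mul]
    refine Finset.sum_congr rfl fun i _ => ?_
    rw [mul_smul_comm, smul_mul_assoc, ← mono_mul, ← mono_mul]
    simp only [mul_assoc]
  · intro i
    obtain ⟨m, hm, hlt⟩ := hl i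
    refine ⟨m, hm, ?_⟩
    have := hmono _ _ A B hlt
    simpa [mul_assoc] using this

end Helpers
section OrderHelpers

variable {M : Type*} [Monoid M] {lt : M → M → Prop}

theorem MonOrd.irr (h : MonOrd lt) (x : M) : ¬ lt x x :=
  h.1.toIsStrictOrder.toIrrefl.irrefl x

theorem MonOrd.trans' (h : MonOrd lt) {x y z : M} : lt x y → lt y z → lt x z :=
  h.1.toIsStrictOrder.toIsTrans.trans x y z

theorem MonOrd.asym (h : MonOrd lt) {x y : M} : lt x y → lt y x → False :=
  fun h1 h2 => h.irr x (h.trans' h1 h2)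

theorem MonOrd.tri (h : MonOrd lt) (x y : M) : lt x y ∨ x = y ∨ lt y x :=
  by
    rcases Classical.em (lt x y) with h1 | h1
    · exact Or.inl h1
    rcases Classical.em (lt y x) with h2 | h2
    · exact Or.inr (Or.inr h2)
    exact Or.inr (Or.inl (h.1.toTrichotomous.trichotomous x y h1 h2))

theorem lead_unique {k : Type*} [CommRing k] (h : MonOrd lt) {f : MonoidAlgebra k M} {m m' : M}
    (h1 : IsLeadR lt f m) (h2 : IsLeadR lt f m') : m = m' := by
  by_contra hne
  exact h.asym (h2.2 m h1.1 hne) (h1.2 m' h2.1 (Ne.symm hne))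

theorem exists_max (h : MonOrd lt) {n : ℕ} (g : Fin (n + 1) → M) :
    ∃ i₀ : Fin (n + 1), ∀ i, g i = g i₀ ∨ lt (g i) (g i₀) := by
  induction n with
  | zero => exact ⟨0, fun i => Or.inl (congrArg g (Fin.ext (by omega)))⟩
  | succ n ih =>
      obtain ⟨j₀, hj⟩ := ih (fun j => g j.castSucc)
      rcases h.tri (g (Fin.last _)) (g j₀.castSucc) with hlast | heq | hgt
      · refine ⟨j₀.castSucc, fun i => ?_⟩
        induction i using Fin.lastCases with
        | last => exact Or.inr hlast
        | cast j => exact hj j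
      · refine ⟨j₀.castSucc, fun i => ?_⟩
        induction i using Fin.lastCases with
        | last => exact Or.inl heq
        | cast j => exact hj j
      · refine ⟨Fin.last _, fun i => ?_⟩
        induction i using Fin.lastCases with
        | last => exact Or.inl rfl
        | cast j =>
            rcases hj j with he | hl
            · exact Or.inr (he ▸ hgt)
            · exact Or.inr (h.trans' hl hgt)

end OrderHelpers

section NWHelpers

variable {X Y : Type*}

theorem nw_ctx_inj (a b : NW X Y) : Function.Injective fun v : NW X Y => a * v * b := by
  intro u v huv
  exact mul_left_cancel (mul_right_cancel huv)

end NWHelpers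

section Split

variable {Z : Type*}

private theorem listSplitAux {A u B C v D E₀ : List Z}
    (hC : C = A ++ E₀) (h2 : u ++ B = E₀ ++ (v ++ D)) :
    (∃ E, C = A ++ u ++ E ∧ B = E ++ v ++ D) ∨
    (∃ E, A = C ++ v ++ E ∧ D = E ++ u ++ B) ∨
    (∃ E F, u = E ++ v ++ F ∧ C = A ++ E ∧ D = F ++ B) ∨
    (∃ E F, v = E ++ u ++ F ∧ A = C ++ E ∧ B = F ++ D) ∨
    (∃ E F G, F ≠ [] ∧ u = E ++ F ∧ v = F ++ G ∧ C = A ++ E ∧ B = G ++ D) ∨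
    (∃ E F G, F ≠ [] ∧ v = E ++ F ∧ u = F ++ G ∧ A = C ++ E ∧ D = G ++ B) := by
  rcases List.append_eq_append_iff.1 h2 with ⟨e, he, hB⟩ | ⟨e, he, h3⟩
  · -- E₀ = u ++ e, B = e ++ (v ++ D)
    exact Or.inl ⟨e, by rw [hC, he, List.append_assoc], by rw [hB, List.append_assoc]⟩
  · -- u = E₀ ++ e, v ++ D = e ++ B
    rcases List.append_eq_append_iff.1 h3.symm with ⟨g, hg, hB⟩ | ⟨g, hg, hD⟩
    · -- v = e ++ g, B = g ++ D
      by_cases he0 : e = []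
      · subst he0
        refine Or.inl ⟨[], ?_, ?_⟩
        · rw [hC, he]; simp
        · rw [hB, hg]; simp
      · exact Or.inr (Or.inr (Or.inr (Or.inr (Or.inl ⟨E₀, e, g, he0, he, hg, hC, hB⟩))))
    · -- e = v ++ g, D = g ++ B
      refine Or.inr (Or.inr (Or.inl ⟨E₀, g, ?_, hC, hD⟩))
      rw [he, hg, List.append_assoc]

private theorem listSplit {A u B C v D : List Z} (h : A ++ u ++ B = C ++ v ++ D) :
    (∃ E, C = A ++ u ++ E ∧ B = E ++ v ++ D) ∨
    (∃ E, A = C ++ v ++ E ∧ D = E ++ u ++ B) ∨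
    (∃ E F, u = E ++ v ++ F ∧ C = A ++ E ∧ D = F ++ B) ∨
    (∃ E F, v = E ++ u ++ F ∧ A = C ++ E ∧ B = F ++ D) ∨
    (∃ E F G, F ≠ [] ∧ u = E ++ F ∧ v = F ++ G ∧ C = A ++ E ∧ B = G ++ D) ∨
    (∃ E F G, F ≠ [] ∧ v = E ++ F ∧ u = F ++ G ∧ A = C ++ E ∧ D = G ++ B) := by
  rw [List.append_assoc, List.append_assoc] at h
  rcases List.append_eq_append_iff.1 h with ⟨e, he, h2⟩ | ⟨e, he, h2⟩
  · exact listSplitAux he h2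
  · rcases listSplitAux he h2 with ⟨E,p1,p2⟩|⟨E,p1,p2⟩|⟨E,F,p1,p2,p3⟩|⟨E,F,p1,p2,p3⟩|
      ⟨E,F,G,p0,p1,p2,p3,p4⟩|⟨E,F,G,p0,p1,p2,p3,p4⟩
    · exact Or.inr (Or.inl ⟨E,p1,p2⟩)
    · exact Or.inl ⟨E,p1,p2⟩
    · exact Or.inr (Or.inr (Or.inr (Or.inl ⟨E,F,p1,p2,p3⟩)))
    · exact Or.inr (Or.inr (Or.inl ⟨E,F,p1,p2,p3⟩))
    · exact Or.inr (Or.inr (Or.inr (Or.inr (Or.inr ⟨E,F,G,p0,p1,p2,p3,p4⟩))))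
    · exact Or.inr (Or.inr (Or.inr (Or.inr (Or.inl ⟨E,F,G,p0,p1,p2,p3,p4⟩))))

theorem freeSplit {A u B C v D : FreeMonoid Z} (h : A * u * B = C * v * D) :
    (∃ E, C = A * u * E ∧ B = E * v * D) ∨
    (∃ E, A = C * v * E ∧ D = E * u * B) ∨
    (∃ E F, u = E * v * F ∧ C = A * E ∧ D = F * B) ∨
    (∃ E F, v = E * u * F ∧ A = C * E ∧ B = F * D) ∨
    (∃ E F G, F ≠ 1 ∧ u = E * F ∧ v = F * G ∧ C = A * E ∧ B = G * D) ∨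
    (∃ E F G, F ≠ 1 ∧ v = E * F ∧ u = F * G ∧ A = C * E ∧ D = G * B) := by
  have inj : Function.Injective (FreeMonoid.toList (α := Z)) := FreeMonoid.toList.injective
  have h' : A.toList ++ u.toList ++ B.toList = C.toList ++ v.toList ++ D.toList := by
    simpa [FreeMonoid.toList_mul] using congrArg FreeMonoid.toList h
  have one_ne : ∀ F : List Z, F ≠ [] → FreeMonoid.ofList F ≠ 1 := by
    intro F hF e
    exact hF (by simpa using congrArg FreeMonoid.toList e)
  rcases listSplit h' with ⟨E,p1,p2⟩|⟨E,p1,p2⟩|⟨E,F,p1,p2,p3⟩|⟨E,F,p1,p2,p3⟩|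
      ⟨E,F,G,p0,p1,p2,p3,p4⟩|⟨E,F,G,p0,p1,p2,p3,p4⟩
  · exact Or.inl ⟨FreeMonoid.ofList E,
      inj (by simpa [FreeMonoid.toList_mul, List.append_assoc] using p1),
      inj (by simpa [FreeMonoid.toList_mul, List.append_assoc] using p2)⟩
  · exact Or.inr (Or.inl ⟨FreeMonoid.ofList E,
      inj (by simpa [FreeMonoid.toList_mul, List.append_assoc] using p1),
      inj (by simpa [FreeMonoid.toList_mul, List.append_assoc] using p2)⟩)
  · exact Or.inr (Or.inr (Or.inl ⟨FreeMonoid.ofList E, FreeMonoid.ofList F,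
      inj (by simpa [FreeMonoid.toList_mul, List.append_assoc] using p1),
      inj (by simpa [FreeMonoid.toList_mul, List.append_assoc] using p2),
      inj (by simpa [FreeMonoid.toList_mul, List.append_assoc] using p3)⟩))
  · exact Or.inr (Or.inr (Or.inr (Or.inl ⟨FreeMonoid.ofList E, FreeMonoid.ofList F,
      inj (by simpa [FreeMonoid.toList_mul, List.append_assoc] using p1),
      inj (by simpa [FreeMonoid.toList_mul, List.append_assoc] using p2),
      inj (by simpa [FreeMonoid.toList_mul, List.append_assoc] using p3)⟩)))
  · exact Or.inr (Or.inr (Or.inr (Or.inr (Or.inl ⟨FreeMonoid.ofList E, FreeMonoid.ofList F,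
      FreeMonoid.ofList G, one_ne F p0,
      inj (by simpa [FreeMonoid.toList_mul, List.append_assoc] using p1),
      inj (by simpa [FreeMonoid.toList_mul, List.append_assoc] using p2),
      inj (by simpa [FreeMonoid.toList_mul, List.append_assoc] using p3),
      inj (by simpa [FreeMonoid.toList_mul, List.append_assoc] using p4)⟩))))
  · exact Or.inr (Or.inr (Or.inr (Or.inr (Or.inr ⟨FreeMonoid.ofList E, FreeMonoid.ofList F,
      FreeMonoid.ofList G, one_ne F p0,
      inj (by simpa [FreeMonoid.toList_mul, List.append_assoc] using p1),
      inj (by simpa [FreeMonoid.toList_mul, List.append_assoc] using p2),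
      inj (by simpa [FreeMonoid.toList_mul, List.append_assoc] using p3),
      inj (by simpa [FreeMonoid.toList_mul, List.append_assoc] using p4)⟩))))

end Split
section SepMachinery

variable {k : Type*} [CommRing k] {M : Type*} [Monoid M]

theorem mono_one : mono k (1 : M) = 1 := map_one (MonoidAlgebra.of k M)

theorem ctx_split (a b : M) (f : MonoidAlgebra k M) (mf : M) :
    mono k a * f * mono k b = mono k (a * mf * b) + mono k a * (f - mono k mf) * mono k b := by
  rw [mul_sub, sub_mul,
    show mono k a * mono k mf * mono k b = mono k (a * mf * b) by rw [mono_mul, mono_mul]]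
  abel

theorem support_sub_lead [DecidableEq M] {f : MonoidAlgebra k M} {mf : M} (hmonic : f.coeff mf = 1) :
    (f - mono k mf).coeff.support = f.coeff.support.erase mf := by
  ext u
  have hval : (f - mono k mf).coeff u = f.coeff u - Finsupp.single mf (1 : k) u := by
    rw [mono, MonoidAlgebra.of_apply, MonoidAlgebra.coeff_sub, Finsupp.sub_apply,
      MonoidAlgebra.coeff_single]
  by_cases hu : u = mf
  · subst hu
    simp [Finsupp.mem_support_iff, hval, mono, MonoidAlgebra.of_apply, MonoidAlgebra.coeff_single, Finsupp.single_apply, hmonic]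
  · simp [Finsupp.mem_support_iff, hval, mono, MonoidAlgebra.of_apply, MonoidAlgebra.coeff_single, Finsupp.single_apply, hu, Ne.symm hu]

theorem sub_lead_apply {f : MonoidAlgebra k M} {mf u : M} (hu : u ≠ mf) :
    (f - mono k mf).coeff u = f.coeff u := by
  classical
  rw [mono, MonoidAlgebra.of_apply, MonoidAlgebra.coeff_sub, Finsupp.sub_apply,
    MonoidAlgebra.coeff_single, Finsupp.single_apply,
    if_neg (Ne.symm hu), sub_zero]

end SepMachinery

section SepC

variable {Z : Type*}

/-- both occurrences of `u` (via `a,b`) and `v` (via `c,d`) in `w` are "independent":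
we can substitute into each slot independently. -/
def SepC (a u b c v d : FreeMonoid Z) : Prop :=
  ∃ P Q R T : FreeMonoid Z → FreeMonoid Z,
    (∀ x, a * x * b = P x * v * Q x) ∧
    (∀ y, c * y * d = R y * u * T y) ∧
    (∀ x y, P x * y * Q x = R y * x * T y)

theorem sepC_left {a u b c v d E : FreeMonoid Z} (hc : c = a * u * E) (hb : b = E * v * d) :
    SepC a u b c v d :=
  ⟨fun x => a * x * E, fun _ => d, fun _ => a, fun y => E * y * d,
    fun x => by rw [hb]; simp [mul_assoc],
    fun y => by rw [hc]; simp [mul_assoc],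
    fun x y => by simp [mul_assoc]⟩

theorem sepC_right {a u b c v d E : FreeMonoid Z} (ha : a = c * v * E) (hd : d = E * u * b) :
    SepC a u b c v d :=
  ⟨fun _ => c, fun x => E * x * b, fun y => c * y * E, fun _ => b,
    fun x => by rw [ha]; simp [mul_assoc],
    fun y => by rw [hd]; simp [mul_assoc],
    fun x y => by simp [mul_assoc]⟩

end SepC

section SepTriv

variable {k X Y : Type*} [CommRing k] {lt : NW X Y → NW X Y → Prop}
  {S : Set (MonoidAlgebra k (NW X Y))}

theorem sep_triv (hlt : MonOrd lt) (hmon : ∀ s ∈ S, MonicR lt s)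
    {s t : MonoidAlgebra k (NW X Y)} (hs : s ∈ S) (ht : t ∈ S)
    {ms mt : NW X Y} (hms : IsLeadR lt s ms) (hmt : IsLeadR lt t mt)
    {a b c d : NW X Y} (hw : a * ms * b = c * mt * d)
    (hX : SepC a.1 ms.1 b.1 c.1 mt.1 d.1) (hY : SepC a.2 ms.2 b.2 c.2 mt.2 d.2) :
    TrivModR lt S (a * ms * b) (mono k a * s * mono k b - mono k c * t * mono k d) := by
  classical
  obtain ⟨PX, QX, RX, TX, hPQX, hRTX, hcrX⟩ := hX
  obtain ⟨PY, QY, RY, TY, hPQY, hRTY, hcrY⟩ := hY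
  set P : NW X Y → NW X Y := fun x => (PX x.1, PY x.2) with hP
  set Q : NW X Y → NW X Y := fun x => (QX x.1, QY x.2) with hQ
  set R : NW X Y → NW X Y := fun y => (RX y.1, RY y.2) with hR
  set T : NW X Y → NW X Y := fun y => (TX y.1, TY y.2) with hT
  have hPQ : ∀ x, a * x * b = P x * mt * Q x := fun x =>
    Prod.ext (by simpa [Prod.fst_mul] using hPQX x.1) (by simpa [Prod.snd_mul] using hPQY x.2)
  have hRT : ∀ y, c * y * d = R y * ms * T y := fun y =>
    Prod.ext (by simpa [Prod.fst_mul] using hRTX y.1) (by simpa [Prod.snd_mul] using hRTY y.2)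
  have hcross : ∀ x y, P x * y * Q x = R y * x * T y := fun x y =>
    Prod.ext (by simpa [Prod.fst_mul] using hcrX x.1 y.1)
      (by simpa [Prod.snd_mul] using hcrY x.2 y.2)
  -- monic coefficients
  obtain ⟨ms', hms', hs1⟩ := hmon s hs
  obtain ⟨mt', hmt', ht1⟩ := hmon t ht
  rw [lead_unique hlt hms' hms] at hs1
  rw [lead_unique hlt hmt' hmt] at ht1
  set Fs := s.coeff.support.erase ms with hFsdef
  set Ft := t.coeff.support.erase mt with hFtdef
  have expand_s : ∀ A B : NW X Y,
      mono k A * (s - mono k ms) * mono k B = ∑ v ∈ Fs, s.coeff v • mono k (A * v * B) := by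
    intro A B
    rw [ctx_sum, support_sub_lead hs1]
    exact Finset.sum_congr rfl fun v hv => by
      rw [sub_lead_apply (Finset.ne_of_mem_erase hv)]
  have expand_t : ∀ A B : NW X Y,
      mono k A * (t - mono k mt) * mono k B = ∑ u ∈ Ft, t.coeff u • mono k (A * u * B) := by
    intro A B
    rw [ctx_sum, support_sub_lead ht1]
    exact Finset.sum_congr rfl fun u hu => by
      rw [sub_lead_apply (Finset.ne_of_mem_erase hu)]
  have L1 : mono k a * s * mono k b - mono k c * t * mono k d
      = (∑ v ∈ Fs, s.coeff v • mono k (a * v * b)) - ∑ u ∈ Ft, t.coeff u • mono k (c * u * d) := by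
    rw [ctx_split a b s ms, ctx_split c d t mt, hw, expand_s, expand_t]
    abel
  have L2 : ∀ v, mono k (P v) * t * mono k (Q v)
      = mono k (a * v * b) + ∑ u ∈ Ft, t.coeff u • mono k (P v * u * Q v) := by
    intro v
    rw [ctx_split (P v) (Q v) t mt, ← hPQ v, expand_t]
  have L3 : ∀ u, mono k (R u) * s * mono k (T u)
      = mono k (c * u * d) + ∑ v ∈ Fs, s.coeff v • mono k (R u * v * T u) := by
    intro u
    rw [ctx_split (R u) (T u) s ms, ← hRT u, expand_s]
  have hmain : mono k a * s * mono k b - mono k c * t * mono k d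
      = (∑ v ∈ Fs, s.coeff v • (mono k (P v) * t * mono k (Q v)))
        - ∑ u ∈ Ft, t.coeff u • (mono k (R u) * s * mono k (T u)) := by
    rw [L1]
    simp only [L2, L3, smul_add, Finset.smul_sum, smul_smul, hcross]
    rw [Finset.sum_add_distrib, Finset.sum_add_distrib]
    have L4 : ∑ v ∈ Fs, ∑ u ∈ Ft, (s.coeff v * t.coeff u) • mono k (R u * v * T u)
        = ∑ u ∈ Ft, ∑ v ∈ Fs, (t.coeff u * s.coeff v) • mono k (R u * v * T u) := by
      rw [Finset.sum_comm]
      exact Finset.sum_congr rfl fun u _ => Finset.sum_congr rfl fun v _ => by rw [mul_comm]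
    rw [L4]
    abel
  rw [hmain]
  refine TrivModR.sub (trivModR_sum Fs _ P Q (fun _ => t) (fun _ _ => ht) ?_)
    (trivModR_sum Ft _ R T (fun _ => s) (fun _ _ => hs) ?_)
  · intro v hv
    refine ⟨mt, hmt, ?_⟩
    rw [← hPQ v]
    exact hlt.2.2 v ms a b (hms.2 v (Finset.mem_of_mem_erase hv) (Finset.ne_of_mem_erase hv))
  · intro u hu
    refine ⟨ms, hms, ?_⟩
    rw [← hRT u, hw]
    exact hlt.2.2 u mt c d (hmt.2 u (Finset.mem_of_mem_erase hu) (Finset.ne_of_mem_erase hu))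
end SepTriv

section KeyLemmas

variable {k X Y : Type*} [CommRing k] {lt : NW X Y → NW X Y → Prop}
  {S : Set (MonoidAlgebra k (NW X Y))}

theorem len_pos {Z : Type*} {u : FreeMonoid Z} (h : u ≠ 1) : 0 < u.length :=
  Nat.pos_of_ne_zero fun h0 => h (FreeMonoid.length_eq_zero.mp h0)

theorem TrivModR.swap {M : Type*} [Monoid M] {lt' : M → M → Prop}
    {S' : Set (MonoidAlgebra k M)} {w w' : M} {x y : MonoidAlgebra k M} (hww : w = w')
    (H : TrivModR lt' S' w' (y - x)) : TrivModR lt' S' w (x - y) := by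
  rw [hww, ← neg_sub]; exact H.neg

theorem key_step (hlt : MonOrd lt) (hS : IsGSB lt S)
    {s t : MonoidAlgebra k (NW X Y)} (hs : s ∈ S) (ht : t ∈ S)
    {ms mt : NW X Y} (hms : IsLeadR lt s ms) (hmt : IsLeadR lt t mt)
    {a b c d : NW X Y} (A B pa pb pc pd w₀ : NW X Y)
    (ha : a = A * pa) (hb : b = pb * B) (hc : c = A * pc) (hd : d = pd * B)
    (hw : a * ms * b = A * w₀ * B)
    (hcomp : IsComp s t ms mt (mono k pa * s * mono k pb - mono k pc * t * mono k pd) w₀) :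
    TrivModR lt S (a * ms * b) (mono k a * s * mono k b - mono k c * t * mono k d) := by
  have H := (hS.2 s hs t ht ms mt _ w₀ hms hmt hcomp).lift hlt.2.2 A B
  have heq : mono k a * s * mono k b - mono k c * t * mono k d
      = mono k A * (mono k pa * s * mono k pb - mono k pc * t * mono k pd) * mono k B := by
    conv_lhs => rw [ha, hb, hc, hd]
    rw [← mono_mul, ← mono_mul, ← mono_mul, ← mono_mul]
    simp only [mul_sub, sub_mul, mul_assoc]
  rw [heq, hw]
  exact H


theorem key31 (hlt : MonOrd lt) (hS : IsGSB lt S)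
    {s t : MonoidAlgebra k (NW X Y)} (hs : s ∈ S) (ht : t ∈ S)
    {ms mt : NW X Y} (hms : IsLeadR lt s ms) (hmt : IsLeadR lt t mt)
    {a b c d : NW X Y} {E F : FreeMonoid X} {E2 : FreeMonoid Y}
    (hX1 : ms.1 = E * mt.1 * F) (hX2 : c.1 = a.1 * E) (hX3 : d.1 = F * b.1) (hY1 : c.2 = a.2 * ms.2 * E2) (hY2 : b.2 = E2 * mt.2 * d.2) :
    TrivModR lt S (a * ms * b) (mono k a * s * mono k b - mono k c * t * mono k d) :=
  key_step hlt hS hs ht hms hmt a (b.1, d.2) 1 (1, E2 * mt.2) (E, ms.2 * E2) (F, 1)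
    (ms.1, ms.2 * E2 * mt.2)
    (by apply Prod.ext <;> simp [Prod.fst_mul, Prod.snd_mul, hX1, hX2, hX3, hY1, hY2, mul_assoc])
    (by apply Prod.ext <;> simp [Prod.fst_mul, Prod.snd_mul, hX1, hX2, hX3, hY1, hY2, mul_assoc])
    (by apply Prod.ext <;> simp [Prod.fst_mul, Prod.snd_mul, hX1, hX2, hX3, hY1, hY2, mul_assoc])
    (by apply Prod.ext <;> simp [Prod.fst_mul, Prod.snd_mul, hX1, hX2, hX3, hY1, hY2, mul_assoc])
    (by apply Prod.ext <;> simp [Prod.fst_mul, Prod.snd_mul, hX1, hX2, hX3, hY1, hY2, mul_assoc])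
    (by exact Or.inl ⟨E, F, E2, hX1, Or.inl ⟨rfl, (by simp [mono_one])⟩⟩)


theorem key32 (hlt : MonOrd lt) (hS : IsGSB lt S)
    {s t : MonoidAlgebra k (NW X Y)} (hs : s ∈ S) (ht : t ∈ S)
    {ms mt : NW X Y} (hms : IsLeadR lt s ms) (hmt : IsLeadR lt t mt)
    {a b c d : NW X Y} {E F : FreeMonoid X} {E2 : FreeMonoid Y}
    (hX1 : ms.1 = E * mt.1 * F) (hX2 : c.1 = a.1 * E) (hX3 : d.1 = F * b.1) (hY1 : a.2 = c.2 * mt.2 * E2) (hY2 : d.2 = E2 * ms.2 * b.2) :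
    TrivModR lt S (a * ms * b) (mono k a * s * mono k b - mono k c * t * mono k d) :=
  key_step hlt hS hs ht hms hmt (a.1, c.2) b (1, mt.2 * E2) 1 (E, 1) (F, E2 * ms.2)
    (ms.1, mt.2 * E2 * ms.2)
    (by apply Prod.ext <;> simp [Prod.fst_mul, Prod.snd_mul, hX1, hX2, hX3, hY1, hY2, mul_assoc])
    (by apply Prod.ext <;> simp [Prod.fst_mul, Prod.snd_mul, hX1, hX2, hX3, hY1, hY2, mul_assoc])
    (by apply Prod.ext <;> simp [Prod.fst_mul, Prod.snd_mul, hX1, hX2, hX3, hY1, hY2, mul_assoc])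
    (by apply Prod.ext <;> simp [Prod.fst_mul, Prod.snd_mul, hX1, hX2, hX3, hY1, hY2, mul_assoc])
    (by apply Prod.ext <;> simp [Prod.fst_mul, Prod.snd_mul, hX1, hX2, hX3, hY1, hY2, mul_assoc])
    (by exact Or.inl ⟨E, F, E2, hX1, Or.inr ⟨rfl, (by simp [mono_one])⟩⟩)


theorem key13 (hlt : MonOrd lt) (hS : IsGSB lt S)
    {s t : MonoidAlgebra k (NW X Y)} (hs : s ∈ S) (ht : t ∈ S)
    {ms mt : NW X Y} (hms : IsLeadR lt s ms) (hmt : IsLeadR lt t mt)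
    {a b c d : NW X Y} {E : FreeMonoid X} {E2 F2 : FreeMonoid Y}
    (hX1 : c.1 = a.1 * ms.1 * E) (hX2 : b.1 = E * mt.1 * d.1) (hY1 : ms.2 = E2 * mt.2 * F2) (hY2 : c.2 = a.2 * E2) (hY3 : d.2 = F2 * b.2) :
    TrivModR lt S (a * ms * b) (mono k a * s * mono k b - mono k c * t * mono k d) :=
  key_step hlt hS hs ht hms hmt a (d.1, b.2) 1 (E * mt.1, 1) (ms.1 * E, E2) (1, F2)
    (ms.1 * E * mt.1, ms.2)
    (by apply Prod.ext <;> simp [Prod.fst_mul, Prod.snd_mul, hX1, hX2, hY1, hY2, hY3, mul_assoc])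
    (by apply Prod.ext <;> simp [Prod.fst_mul, Prod.snd_mul, hX1, hX2, hY1, hY2, hY3, mul_assoc])
    (by apply Prod.ext <;> simp [Prod.fst_mul, Prod.snd_mul, hX1, hX2, hY1, hY2, hY3, mul_assoc])
    (by apply Prod.ext <;> simp [Prod.fst_mul, Prod.snd_mul, hX1, hX2, hY1, hY2, hY3, mul_assoc])
    (by apply Prod.ext <;> simp [Prod.fst_mul, Prod.snd_mul, hX1, hX2, hY1, hY2, hY3, mul_assoc])
    (by exact Or.inr (Or.inl ⟨E, E2, F2, hY1, Or.inl ⟨rfl, (by simp [mono_one])⟩⟩))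


theorem key23 (hlt : MonOrd lt) (hS : IsGSB lt S)
    {s t : MonoidAlgebra k (NW X Y)} (hs : s ∈ S) (ht : t ∈ S)
    {ms mt : NW X Y} (hms : IsLeadR lt s ms) (hmt : IsLeadR lt t mt)
    {a b c d : NW X Y} {E : FreeMonoid X} {E2 F2 : FreeMonoid Y}
    (hX1 : a.1 = c.1 * mt.1 * E) (hX2 : d.1 = E * ms.1 * b.1) (hY1 : ms.2 = E2 * mt.2 * F2) (hY2 : c.2 = a.2 * E2) (hY3 : d.2 = F2 * b.2) :
    TrivModR lt S (a * ms * b) (mono k a * s * mono k b - mono k c * t * mono k d) :=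
  key_step hlt hS hs ht hms hmt (c.1, a.2) b (mt.1 * E, 1) 1 (1, E2) (E * ms.1, F2)
    (mt.1 * E * ms.1, ms.2)
    (by apply Prod.ext <;> simp [Prod.fst_mul, Prod.snd_mul, hX1, hX2, hY1, hY2, hY3, mul_assoc])
    (by apply Prod.ext <;> simp [Prod.fst_mul, Prod.snd_mul, hX1, hX2, hY1, hY2, hY3, mul_assoc])
    (by apply Prod.ext <;> simp [Prod.fst_mul, Prod.snd_mul, hX1, hX2, hY1, hY2, hY3, mul_assoc])
    (by apply Prod.ext <;> simp [Prod.fst_mul, Prod.snd_mul, hX1, hX2, hY1, hY2, hY3, mul_assoc])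
    (by apply Prod.ext <;> simp [Prod.fst_mul, Prod.snd_mul, hX1, hX2, hY1, hY2, hY3, mul_assoc])
    (by exact Or.inr (Or.inl ⟨E, E2, F2, hY1, Or.inr ⟨rfl, (by simp [mono_one])⟩⟩))


theorem key33 (hlt : MonOrd lt) (hS : IsGSB lt S)
    {s t : MonoidAlgebra k (NW X Y)} (hs : s ∈ S) (ht : t ∈ S)
    {ms mt : NW X Y} (hms : IsLeadR lt s ms) (hmt : IsLeadR lt t mt)
    {a b c d : NW X Y} {E F : FreeMonoid X} {E2 F2 : FreeMonoid Y}
    (hX1 : ms.1 = E * mt.1 * F) (hX2 : c.1 = a.1 * E) (hX3 : d.1 = F * b.1) (hY1 : ms.2 = E2 * mt.2 * F2) (hY2 : c.2 = a.2 * E2) (hY3 : d.2 = F2 * b.2) :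
    TrivModR lt S (a * ms * b) (mono k a * s * mono k b - mono k c * t * mono k d) :=
  key_step hlt hS hs ht hms hmt a b 1 1 (E, E2) (F, F2)
    (ms.1, ms.2)
    (by apply Prod.ext <;> simp [Prod.fst_mul, Prod.snd_mul, hX1, hX2, hX3, hY1, hY2, hY3, mul_assoc])
    (by apply Prod.ext <;> simp [Prod.fst_mul, Prod.snd_mul, hX1, hX2, hX3, hY1, hY2, hY3, mul_assoc])
    (by apply Prod.ext <;> simp [Prod.fst_mul, Prod.snd_mul, hX1, hX2, hX3, hY1, hY2, hY3, mul_assoc])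
    (by apply Prod.ext <;> simp [Prod.fst_mul, Prod.snd_mul, hX1, hX2, hX3, hY1, hY2, hY3, mul_assoc])
    (by apply Prod.ext <;> simp [Prod.fst_mul, Prod.snd_mul, hX1, hX2, hX3, hY1, hY2, hY3, mul_assoc])
    (by exact Or.inr (Or.inr (Or.inl ⟨E, F, E2, F2, hX1, hY1, rfl, (by simp [mono_one])⟩)))


theorem key34 (hlt : MonOrd lt) (hS : IsGSB lt S)
    {s t : MonoidAlgebra k (NW X Y)} (hs : s ∈ S) (ht : t ∈ S)
    {ms mt : NW X Y} (hms : IsLeadR lt s ms) (hmt : IsLeadR lt t mt)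
    {a b c d : NW X Y} {E F : FreeMonoid X} {E2 F2 : FreeMonoid Y}
    (hX1 : ms.1 = E * mt.1 * F) (hX2 : c.1 = a.1 * E) (hX3 : d.1 = F * b.1) (hY1 : mt.2 = E2 * ms.2 * F2) (hY2 : a.2 = c.2 * E2) (hY3 : b.2 = F2 * d.2) :
    TrivModR lt S (a * ms * b) (mono k a * s * mono k b - mono k c * t * mono k d) :=
  key_step hlt hS hs ht hms hmt (a.1, c.2) (b.1, d.2) (1, E2) (1, F2) (E, 1) (F, 1)
    (ms.1, mt.2)
    (by apply Prod.ext <;> simp [Prod.fst_mul, Prod.snd_mul, hX1, hX2, hX3, hY1, hY2, hY3, mul_assoc])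
    (by apply Prod.ext <;> simp [Prod.fst_mul, Prod.snd_mul, hX1, hX2, hX3, hY1, hY2, hY3, mul_assoc])
    (by apply Prod.ext <;> simp [Prod.fst_mul, Prod.snd_mul, hX1, hX2, hX3, hY1, hY2, hY3, mul_assoc])
    (by apply Prod.ext <;> simp [Prod.fst_mul, Prod.snd_mul, hX1, hX2, hX3, hY1, hY2, hY3, mul_assoc])
    (by apply Prod.ext <;> simp [Prod.fst_mul, Prod.snd_mul, hX1, hX2, hX3, hY1, hY2, hY3, mul_assoc])
    (by exact Or.inr (Or.inr (Or.inr (Or.inl ⟨E, F, E2, F2, hX1, hY1, rfl, (by simp [mono_one])⟩))))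


theorem key51 (hlt : MonOrd lt) (hS : IsGSB lt S)
    {s t : MonoidAlgebra k (NW X Y)} (hs : s ∈ S) (ht : t ∈ S)
    {ms mt : NW X Y} (hms : IsLeadR lt s ms) (hmt : IsLeadR lt t mt)
    {a b c d : NW X Y} {E F G : FreeMonoid X} {E2 : FreeMonoid Y}
    (hX0 : F ≠ 1) (hX1 : ms.1 = E * F) (hX2 : mt.1 = F * G) (hX3 : c.1 = a.1 * E) (hX4 : b.1 = G * d.1) (hY1 : c.2 = a.2 * ms.2 * E2) (hY2 : b.2 = E2 * mt.2 * d.2) :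
    TrivModR lt S (a * ms * b) (mono k a * s * mono k b - mono k c * t * mono k d) :=
  key_step hlt hS hs ht hms hmt a d 1 (G, E2 * mt.2) (E, ms.2 * E2) 1
    (ms.1 * G, ms.2 * E2 * mt.2)
    (by apply Prod.ext <;> simp [Prod.fst_mul, Prod.snd_mul, hX0, hX1, hX2, hX3, hX4, hY1, hY2, mul_assoc])
    (by apply Prod.ext <;> simp [Prod.fst_mul, Prod.snd_mul, hX0, hX1, hX2, hX3, hX4, hY1, hY2, mul_assoc])
    (by apply Prod.ext <;> simp [Prod.fst_mul, Prod.snd_mul, hX0, hX1, hX2, hX3, hX4, hY1, hY2, mul_assoc])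
    (by apply Prod.ext <;> simp [Prod.fst_mul, Prod.snd_mul, hX0, hX1, hX2, hX3, hX4, hY1, hY2, mul_assoc])
    (by apply Prod.ext <;> simp [Prod.fst_mul, Prod.snd_mul, hX0, hX1, hX2, hX3, hX4, hY1, hY2, mul_assoc])
    (by exact Or.inr (Or.inr (Or.inr (Or.inr (Or.inl ⟨G, E, E2, (by rw [hX1, hX2]; exact mul_assoc E F G), (by have hp := len_pos hX0; rw [hX1, hX2]; simp only [FreeMonoid.length_mul]; omega), Or.inl ⟨rfl, (by simp [mono_one])⟩⟩)))))


theorem key52 (hlt : MonOrd lt) (hS : IsGSB lt S)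
    {s t : MonoidAlgebra k (NW X Y)} (hs : s ∈ S) (ht : t ∈ S)
    {ms mt : NW X Y} (hms : IsLeadR lt s ms) (hmt : IsLeadR lt t mt)
    {a b c d : NW X Y} {E F G : FreeMonoid X} {E2 : FreeMonoid Y}
    (hX0 : F ≠ 1) (hX1 : ms.1 = E * F) (hX2 : mt.1 = F * G) (hX3 : c.1 = a.1 * E) (hX4 : b.1 = G * d.1) (hY1 : a.2 = c.2 * mt.2 * E2) (hY2 : d.2 = E2 * ms.2 * b.2) :
    TrivModR lt S (a * ms * b) (mono k a * s * mono k b - mono k c * t * mono k d) :=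
  key_step hlt hS hs ht hms hmt (a.1, c.2) (d.1, b.2) (1, mt.2 * E2) (G, 1) (E, 1) (1, E2 * ms.2)
    (ms.1 * G, mt.2 * E2 * ms.2)
    (by apply Prod.ext <;> simp [Prod.fst_mul, Prod.snd_mul, hX0, hX1, hX2, hX3, hX4, hY1, hY2, mul_assoc])
    (by apply Prod.ext <;> simp [Prod.fst_mul, Prod.snd_mul, hX0, hX1, hX2, hX3, hX4, hY1, hY2, mul_assoc])
    (by apply Prod.ext <;> simp [Prod.fst_mul, Prod.snd_mul, hX0, hX1, hX2, hX3, hX4, hY1, hY2, mul_assoc])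
    (by apply Prod.ext <;> simp [Prod.fst_mul, Prod.snd_mul, hX0, hX1, hX2, hX3, hX4, hY1, hY2, mul_assoc])
    (by apply Prod.ext <;> simp [Prod.fst_mul, Prod.snd_mul, hX0, hX1, hX2, hX3, hX4, hY1, hY2, mul_assoc])
    (by exact Or.inr (Or.inr (Or.inr (Or.inr (Or.inl ⟨G, E, E2, (by rw [hX1, hX2]; exact mul_assoc E F G), (by have hp := len_pos hX0; rw [hX1, hX2]; simp only [FreeMonoid.length_mul]; omega), Or.inr ⟨rfl, (by simp [mono_one])⟩⟩)))))


theorem key15 (hlt : MonOrd lt) (hS : IsGSB lt S)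
    {s t : MonoidAlgebra k (NW X Y)} (hs : s ∈ S) (ht : t ∈ S)
    {ms mt : NW X Y} (hms : IsLeadR lt s ms) (hmt : IsLeadR lt t mt)
    {a b c d : NW X Y} {E : FreeMonoid X} {E2 F2 G2 : FreeMonoid Y}
    (hX1 : c.1 = a.1 * ms.1 * E) (hX2 : b.1 = E * mt.1 * d.1) (hY0 : F2 ≠ 1) (hY1 : ms.2 = E2 * F2) (hY2 : mt.2 = F2 * G2) (hY3 : c.2 = a.2 * E2) (hY4 : b.2 = G2 * d.2) :
    TrivModR lt S (a * ms * b) (mono k a * s * mono k b - mono k c * t * mono k d) :=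
  key_step hlt hS hs ht hms hmt a d 1 (E * mt.1, G2) (ms.1 * E, E2) 1
    (ms.1 * E * mt.1, ms.2 * G2)
    (by apply Prod.ext <;> simp [Prod.fst_mul, Prod.snd_mul, hX1, hX2, hY0, hY1, hY2, hY3, hY4, mul_assoc])
    (by apply Prod.ext <;> simp [Prod.fst_mul, Prod.snd_mul, hX1, hX2, hY0, hY1, hY2, hY3, hY4, mul_assoc])
    (by apply Prod.ext <;> simp [Prod.fst_mul, Prod.snd_mul, hX1, hX2, hY0, hY1, hY2, hY3, hY4, mul_assoc])
    (by apply Prod.ext <;> simp [Prod.fst_mul, Prod.snd_mul, hX1, hX2, hY0, hY1, hY2, hY3, hY4, mul_assoc])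
    (by apply Prod.ext <;> simp [Prod.fst_mul, Prod.snd_mul, hX1, hX2, hY0, hY1, hY2, hY3, hY4, mul_assoc])
    (by exact Or.inr (Or.inr (Or.inr (Or.inr (Or.inr (Or.inl ⟨E, G2, E2, (by rw [hY1, hY2]; exact mul_assoc E2 F2 G2), (by have hp := len_pos hY0; rw [hY1, hY2]; simp only [FreeMonoid.length_mul]; omega), Or.inl ⟨rfl, (by simp [mono_one])⟩⟩))))))


theorem key25 (hlt : MonOrd lt) (hS : IsGSB lt S)
    {s t : MonoidAlgebra k (NW X Y)} (hs : s ∈ S) (ht : t ∈ S)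
    {ms mt : NW X Y} (hms : IsLeadR lt s ms) (hmt : IsLeadR lt t mt)
    {a b c d : NW X Y} {E : FreeMonoid X} {E2 F2 G2 : FreeMonoid Y}
    (hX1 : a.1 = c.1 * mt.1 * E) (hX2 : d.1 = E * ms.1 * b.1) (hY0 : F2 ≠ 1) (hY1 : ms.2 = E2 * F2) (hY2 : mt.2 = F2 * G2) (hY3 : c.2 = a.2 * E2) (hY4 : b.2 = G2 * d.2) :
    TrivModR lt S (a * ms * b) (mono k a * s * mono k b - mono k c * t * mono k d) :=
  key_step hlt hS hs ht hms hmt (c.1, a.2) (b.1, d.2) (mt.1 * E, 1) (1, G2) (1, E2) (E * ms.1, 1)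
    (mt.1 * E * ms.1, ms.2 * G2)
    (by apply Prod.ext <;> simp [Prod.fst_mul, Prod.snd_mul, hX1, hX2, hY0, hY1, hY2, hY3, hY4, mul_assoc])
    (by apply Prod.ext <;> simp [Prod.fst_mul, Prod.snd_mul, hX1, hX2, hY0, hY1, hY2, hY3, hY4, mul_assoc])
    (by apply Prod.ext <;> simp [Prod.fst_mul, Prod.snd_mul, hX1, hX2, hY0, hY1, hY2, hY3, hY4, mul_assoc])
    (by apply Prod.ext <;> simp [Prod.fst_mul, Prod.snd_mul, hX1, hX2, hY0, hY1, hY2, hY3, hY4, mul_assoc])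
    (by apply Prod.ext <;> simp [Prod.fst_mul, Prod.snd_mul, hX1, hX2, hY0, hY1, hY2, hY3, hY4, mul_assoc])
    (by exact Or.inr (Or.inr (Or.inr (Or.inr (Or.inr (Or.inl ⟨E, G2, E2, (by rw [hY1, hY2]; exact mul_assoc E2 F2 G2), (by have hp := len_pos hY0; rw [hY1, hY2]; simp only [FreeMonoid.length_mul]; omega), Or.inr ⟨rfl, (by simp [mono_one])⟩⟩))))))


theorem key55 (hlt : MonOrd lt) (hS : IsGSB lt S)
    {s t : MonoidAlgebra k (NW X Y)} (hs : s ∈ S) (ht : t ∈ S)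
    {ms mt : NW X Y} (hms : IsLeadR lt s ms) (hmt : IsLeadR lt t mt)
    {a b c d : NW X Y} {E F G : FreeMonoid X} {E2 F2 G2 : FreeMonoid Y}
    (hX0 : F ≠ 1) (hX1 : ms.1 = E * F) (hX2 : mt.1 = F * G) (hX3 : c.1 = a.1 * E) (hX4 : b.1 = G * d.1) (hY0 : F2 ≠ 1) (hY1 : ms.2 = E2 * F2) (hY2 : mt.2 = F2 * G2) (hY3 : c.2 = a.2 * E2) (hY4 : b.2 = G2 * d.2) :
    TrivModR lt S (a * ms * b) (mono k a * s * mono k b - mono k c * t * mono k d) :=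
  key_step hlt hS hs ht hms hmt a d 1 (G, G2) (E, E2) 1
    (ms.1 * G, ms.2 * G2)
    (by apply Prod.ext <;> simp [Prod.fst_mul, Prod.snd_mul, hX0, hX1, hX2, hX3, hX4, hY0, hY1, hY2, hY3, hY4, mul_assoc])
    (by apply Prod.ext <;> simp [Prod.fst_mul, Prod.snd_mul, hX0, hX1, hX2, hX3, hX4, hY0, hY1, hY2, hY3, hY4, mul_assoc])
    (by apply Prod.ext <;> simp [Prod.fst_mul, Prod.snd_mul, hX0, hX1, hX2, hX3, hX4, hY0, hY1, hY2, hY3, hY4, mul_assoc])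
    (by apply Prod.ext <;> simp [Prod.fst_mul, Prod.snd_mul, hX0, hX1, hX2, hX3, hX4, hY0, hY1, hY2, hY3, hY4, mul_assoc])
    (by apply Prod.ext <;> simp [Prod.fst_mul, Prod.snd_mul, hX0, hX1, hX2, hX3, hX4, hY0, hY1, hY2, hY3, hY4, mul_assoc])
    (by exact Or.inr (Or.inr (Or.inr (Or.inr (Or.inr (Or.inr (Or.inl ⟨G, E, G2, E2, (by rw [hX1, hX2]; exact mul_assoc E F G), (by rw [hY1, hY2]; exact mul_assoc E2 F2 G2), (by have hp := len_pos hX0; rw [hX1, hX2]; simp only [FreeMonoid.length_mul]; omega), (by have hp := len_pos hY0; rw [hY1, hY2]; simp only [FreeMonoid.length_mul]; omega), rfl, (by simp [mono_one])⟩)))))))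


theorem key56 (hlt : MonOrd lt) (hS : IsGSB lt S)
    {s t : MonoidAlgebra k (NW X Y)} (hs : s ∈ S) (ht : t ∈ S)
    {ms mt : NW X Y} (hms : IsLeadR lt s ms) (hmt : IsLeadR lt t mt)
    {a b c d : NW X Y} {E F G : FreeMonoid X} {E2 F2 G2 : FreeMonoid Y}
    (hX0 : F ≠ 1) (hX1 : ms.1 = E * F) (hX2 : mt.1 = F * G) (hX3 : c.1 = a.1 * E) (hX4 : b.1 = G * d.1) (hY0 : F2 ≠ 1) (hY1 : mt.2 = E2 * F2) (hY2 : ms.2 = F2 * G2) (hY3 : a.2 = c.2 * E2) (hY4 : d.2 = G2 * b.2) :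
    TrivModR lt S (a * ms * b) (mono k a * s * mono k b - mono k c * t * mono k d) :=
  key_step hlt hS hs ht hms hmt (a.1, c.2) (d.1, b.2) (1, E2) (G, 1) (E, 1) (1, G2)
    (ms.1 * G, E2 * ms.2)
    (by apply Prod.ext <;> simp [Prod.fst_mul, Prod.snd_mul, hX0, hX1, hX2, hX3, hX4, hY0, hY1, hY2, hY3, hY4, mul_assoc])
    (by apply Prod.ext <;> simp [Prod.fst_mul, Prod.snd_mul, hX0, hX1, hX2, hX3, hX4, hY0, hY1, hY2, hY3, hY4, mul_assoc])
    (by apply Prod.ext <;> simp [Prod.fst_mul, Prod.snd_mul, hX0, hX1, hX2, hX3, hX4, hY0, hY1, hY2, hY3, hY4, mul_assoc])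
    (by apply Prod.ext <;> simp [Prod.fst_mul, Prod.snd_mul, hX0, hX1, hX2, hX3, hX4, hY0, hY1, hY2, hY3, hY4, mul_assoc])
    (by apply Prod.ext <;> simp [Prod.fst_mul, Prod.snd_mul, hX0, hX1, hX2, hX3, hX4, hY0, hY1, hY2, hY3, hY4, mul_assoc])
    (by exact Or.inr (Or.inr (Or.inr (Or.inr (Or.inr (Or.inr (Or.inr (Or.inl ⟨G, E, E2, G2, (by rw [hX1, hX2]; exact mul_assoc E F G), (by rw [hY1, hY2]; exact (mul_assoc E2 F2 G2).symm), (by have hp := len_pos hX0; rw [hX1, hX2]; simp only [FreeMonoid.length_mul]; omega), (by have hp := len_pos hY0; rw [hY1, hY2]; simp only [FreeMonoid.length_mul]; omega), rfl, (by simp [mono_one])⟩))))))))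


theorem key35 (hlt : MonOrd lt) (hS : IsGSB lt S)
    {s t : MonoidAlgebra k (NW X Y)} (hs : s ∈ S) (ht : t ∈ S)
    {ms mt : NW X Y} (hms : IsLeadR lt s ms) (hmt : IsLeadR lt t mt)
    {a b c d : NW X Y} {E F : FreeMonoid X} {E2 F2 G2 : FreeMonoid Y}
    (hX1 : ms.1 = E * mt.1 * F) (hX2 : c.1 = a.1 * E) (hX3 : d.1 = F * b.1) (hY0 : F2 ≠ 1) (hY1 : ms.2 = E2 * F2) (hY2 : mt.2 = F2 * G2) (hY3 : c.2 = a.2 * E2) (hY4 : b.2 = G2 * d.2) :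
    TrivModR lt S (a * ms * b) (mono k a * s * mono k b - mono k c * t * mono k d) :=
  key_step hlt hS hs ht hms hmt a (b.1, d.2) 1 (1, G2) (E, E2) (F, 1)
    (ms.1, ms.2 * G2)
    (by apply Prod.ext <;> simp [Prod.fst_mul, Prod.snd_mul, hX1, hX2, hX3, hY0, hY1, hY2, hY3, hY4, mul_assoc])
    (by apply Prod.ext <;> simp [Prod.fst_mul, Prod.snd_mul, hX1, hX2, hX3, hY0, hY1, hY2, hY3, hY4, mul_assoc])
    (by apply Prod.ext <;> simp [Prod.fst_mul, Prod.snd_mul, hX1, hX2, hX3, hY0, hY1, hY2, hY3, hY4, mul_assoc])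
    (by apply Prod.ext <;> simp [Prod.fst_mul, Prod.snd_mul, hX1, hX2, hX3, hY0, hY1, hY2, hY3, hY4, mul_assoc])
    (by apply Prod.ext <;> simp [Prod.fst_mul, Prod.snd_mul, hX1, hX2, hX3, hY0, hY1, hY2, hY3, hY4, mul_assoc])
    (by exact Or.inr (Or.inr (Or.inr (Or.inr (Or.inr (Or.inr (Or.inr (Or.inr (Or.inl ⟨E, F, G2, E2, hX1, Or.inl ⟨(by rw [hY1, hY2]; exact mul_assoc E2 F2 G2), (by have hp := len_pos hY0; rw [hY1, hY2]; simp only [FreeMonoid.length_mul]; omega), rfl, (by simp [mono_one])⟩⟩)))))))))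


theorem key36 (hlt : MonOrd lt) (hS : IsGSB lt S)
    {s t : MonoidAlgebra k (NW X Y)} (hs : s ∈ S) (ht : t ∈ S)
    {ms mt : NW X Y} (hms : IsLeadR lt s ms) (hmt : IsLeadR lt t mt)
    {a b c d : NW X Y} {E F : FreeMonoid X} {E2 F2 G2 : FreeMonoid Y}
    (hX1 : ms.1 = E * mt.1 * F) (hX2 : c.1 = a.1 * E) (hX3 : d.1 = F * b.1) (hY0 : F2 ≠ 1) (hY1 : mt.2 = E2 * F2) (hY2 : ms.2 = F2 * G2) (hY3 : a.2 = c.2 * E2) (hY4 : d.2 = G2 * b.2) :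
    TrivModR lt S (a * ms * b) (mono k a * s * mono k b - mono k c * t * mono k d) :=
  key_step hlt hS hs ht hms hmt (a.1, c.2) b (1, E2) 1 (E, 1) (F, G2)
    (ms.1, E2 * ms.2)
    (by apply Prod.ext <;> simp [Prod.fst_mul, Prod.snd_mul, hX1, hX2, hX3, hY0, hY1, hY2, hY3, hY4, mul_assoc])
    (by apply Prod.ext <;> simp [Prod.fst_mul, Prod.snd_mul, hX1, hX2, hX3, hY0, hY1, hY2, hY3, hY4, mul_assoc])
    (by apply Prod.ext <;> simp [Prod.fst_mul, Prod.snd_mul, hX1, hX2, hX3, hY0, hY1, hY2, hY3, hY4, mul_assoc])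
    (by apply Prod.ext <;> simp [Prod.fst_mul, Prod.snd_mul, hX1, hX2, hX3, hY0, hY1, hY2, hY3, hY4, mul_assoc])
    (by apply Prod.ext <;> simp [Prod.fst_mul, Prod.snd_mul, hX1, hX2, hX3, hY0, hY1, hY2, hY3, hY4, mul_assoc])
    (by exact Or.inr (Or.inr (Or.inr (Or.inr (Or.inr (Or.inr (Or.inr (Or.inr (Or.inl ⟨E, F, E2, G2, hX1, Or.inr ⟨(by rw [hY1, hY2]; exact (mul_assoc E2 F2 G2).symm), (by have hp := len_pos hY0; rw [hY1, hY2]; simp only [FreeMonoid.length_mul]; omega), rfl, (by simp [mono_one])⟩⟩)))))))))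


theorem key53 (hlt : MonOrd lt) (hS : IsGSB lt S)
    {s t : MonoidAlgebra k (NW X Y)} (hs : s ∈ S) (ht : t ∈ S)
    {ms mt : NW X Y} (hms : IsLeadR lt s ms) (hmt : IsLeadR lt t mt)
    {a b c d : NW X Y} {E F G : FreeMonoid X} {E2 F2 : FreeMonoid Y}
    (hX0 : F ≠ 1) (hX1 : ms.1 = E * F) (hX2 : mt.1 = F * G) (hX3 : c.1 = a.1 * E) (hX4 : b.1 = G * d.1) (hY1 : ms.2 = E2 * mt.2 * F2) (hY2 : c.2 = a.2 * E2) (hY3 : d.2 = F2 * b.2) :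
    TrivModR lt S (a * ms * b) (mono k a * s * mono k b - mono k c * t * mono k d) :=
  key_step hlt hS hs ht hms hmt a (d.1, b.2) 1 (G, 1) (E, E2) (1, F2)
    (ms.1 * G, ms.2)
    (by apply Prod.ext <;> simp [Prod.fst_mul, Prod.snd_mul, hX0, hX1, hX2, hX3, hX4, hY1, hY2, hY3, mul_assoc])
    (by apply Prod.ext <;> simp [Prod.fst_mul, Prod.snd_mul, hX0, hX1, hX2, hX3, hX4, hY1, hY2, hY3, mul_assoc])
    (by apply Prod.ext <;> simp [Prod.fst_mul, Prod.snd_mul, hX0, hX1, hX2, hX3, hX4, hY1, hY2, hY3, mul_assoc])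
    (by apply Prod.ext <;> simp [Prod.fst_mul, Prod.snd_mul, hX0, hX1, hX2, hX3, hX4, hY1, hY2, hY3, mul_assoc])
    (by apply Prod.ext <;> simp [Prod.fst_mul, Prod.snd_mul, hX0, hX1, hX2, hX3, hX4, hY1, hY2, hY3, mul_assoc])
    (by exact Or.inr (Or.inr (Or.inr (Or.inr (Or.inr (Or.inr (Or.inr (Or.inr (Or.inr (⟨G, E, E2, F2, (by rw [hX1, hX2]; exact mul_assoc E F G), (by have hp := len_pos hX0; rw [hX1, hX2]; simp only [FreeMonoid.length_mul]; omega), Or.inl ⟨hY1, rfl, (by simp [mono_one])⟩⟩))))))))))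


theorem key54 (hlt : MonOrd lt) (hS : IsGSB lt S)
    {s t : MonoidAlgebra k (NW X Y)} (hs : s ∈ S) (ht : t ∈ S)
    {ms mt : NW X Y} (hms : IsLeadR lt s ms) (hmt : IsLeadR lt t mt)
    {a b c d : NW X Y} {E F G : FreeMonoid X} {E2 F2 : FreeMonoid Y}
    (hX0 : F ≠ 1) (hX1 : ms.1 = E * F) (hX2 : mt.1 = F * G) (hX3 : c.1 = a.1 * E) (hX4 : b.1 = G * d.1) (hY1 : mt.2 = E2 * ms.2 * F2) (hY2 : a.2 = c.2 * E2) (hY3 : b.2 = F2 * d.2) :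
    TrivModR lt S (a * ms * b) (mono k a * s * mono k b - mono k c * t * mono k d) :=
  key_step hlt hS hs ht hms hmt (a.1, c.2) d (1, E2) (G, F2) (E, 1) 1
    (ms.1 * G, mt.2)
    (by apply Prod.ext <;> simp [Prod.fst_mul, Prod.snd_mul, hX0, hX1, hX2, hX3, hX4, hY1, hY2, hY3, mul_assoc])
    (by apply Prod.ext <;> simp [Prod.fst_mul, Prod.snd_mul, hX0, hX1, hX2, hX3, hX4, hY1, hY2, hY3, mul_assoc])
    (by apply Prod.ext <;> simp [Prod.fst_mul, Prod.snd_mul, hX0, hX1, hX2, hX3, hX4, hY1, hY2, hY3, mul_assoc])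
    (by apply Prod.ext <;> simp [Prod.fst_mul, Prod.snd_mul, hX0, hX1, hX2, hX3, hX4, hY1, hY2, hY3, mul_assoc])
    (by apply Prod.ext <;> simp [Prod.fst_mul, Prod.snd_mul, hX0, hX1, hX2, hX3, hX4, hY1, hY2, hY3, mul_assoc])
    (by exact Or.inr (Or.inr (Or.inr (Or.inr (Or.inr (Or.inr (Or.inr (Or.inr (Or.inr (⟨G, E, E2, F2, (by rw [hX1, hX2]; exact mul_assoc E F G), (by have hp := len_pos hX0; rw [hX1, hX2]; simp only [FreeMonoid.length_mul]; omega), Or.inr ⟨hY1, rfl, (by simp [mono_one])⟩⟩))))))))))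


end KeyLemmas

section Key

variable {k X Y : Type*} [CommRing k] {lt : NW X Y → NW X Y → Prop}
  {S : Set (MonoidAlgebra k (NW X Y))}

theorem key (hlt : MonOrd lt) (hS : IsGSB lt S)
    {s t : MonoidAlgebra k (NW X Y)} (hs : s ∈ S) (ht : t ∈ S)
    {ms mt : NW X Y} (hms : IsLeadR lt s ms) (hmt : IsLeadR lt t mt)
    {a b c d : NW X Y} (hw : a * ms * b = c * mt * d) :
    TrivModR lt S (a * ms * b) (mono k a * s * mono k b - mono k c * t * mono k d) := by
  have hwX : a.1 * ms.1 * b.1 = c.1 * mt.1 * d.1 := by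
    simpa [Prod.fst_mul] using congrArg Prod.fst hw
  have hwY : a.2 * ms.2 * b.2 = c.2 * mt.2 * d.2 := by
    simpa [Prod.snd_mul] using congrArg Prod.snd hw
  rcases freeSplit hwX with ⟨E, hX1, hX2⟩ | ⟨E, hX1, hX2⟩ | ⟨E, F, hX1, hX2, hX3⟩ | ⟨E, F, hX1, hX2, hX3⟩ | ⟨E, F, G, hX0, hX1, hX2, hX3, hX4⟩ | ⟨E, F, G, hX0, hX1, hX2, hX3, hX4⟩
  · rcases freeSplit hwY with ⟨E2, hY1, hY2⟩ | ⟨E2, hY1, hY2⟩ | ⟨E2, F2, hY1, hY2, hY3⟩ | ⟨E2, F2, hY1, hY2, hY3⟩ | ⟨E2, F2, G2, hY0, hY1, hY2, hY3, hY4⟩ | ⟨E2, F2, G2, hY0, hY1, hY2, hY3, hY4⟩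
    · exact sep_triv hlt hS.1 hs ht hms hmt hw (sepC_left hX1 hX2) (sepC_left hY1 hY2)
    · exact sep_triv hlt hS.1 hs ht hms hmt hw (sepC_left hX1 hX2) (sepC_right hY1 hY2)
    · exact key13 hlt hS hs ht hms hmt hX1 hX2 hY1 hY2 hY3
    · exact TrivModR.swap hw (key23 hlt hS ht hs hmt hms hX1 hX2 hY1 hY2 hY3)
    · exact key15 hlt hS hs ht hms hmt hX1 hX2 hY0 hY1 hY2 hY3 hY4
    · exact TrivModR.swap hw (key25 hlt hS ht hs hmt hms hX1 hX2 hY0 hY1 hY2 hY3 hY4)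
  · rcases freeSplit hwY with ⟨E2, hY1, hY2⟩ | ⟨E2, hY1, hY2⟩ | ⟨E2, F2, hY1, hY2, hY3⟩ | ⟨E2, F2, hY1, hY2, hY3⟩ | ⟨E2, F2, G2, hY0, hY1, hY2, hY3, hY4⟩ | ⟨E2, F2, G2, hY0, hY1, hY2, hY3, hY4⟩
    · exact sep_triv hlt hS.1 hs ht hms hmt hw (sepC_right hX1 hX2) (sepC_left hY1 hY2)
    · exact sep_triv hlt hS.1 hs ht hms hmt hw (sepC_right hX1 hX2) (sepC_right hY1 hY2)
    · exact key23 hlt hS hs ht hms hmt hX1 hX2 hY1 hY2 hY3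
    · exact TrivModR.swap hw (key13 hlt hS ht hs hmt hms hX1 hX2 hY1 hY2 hY3)
    · exact key25 hlt hS hs ht hms hmt hX1 hX2 hY0 hY1 hY2 hY3 hY4
    · exact TrivModR.swap hw (key15 hlt hS ht hs hmt hms hX1 hX2 hY0 hY1 hY2 hY3 hY4)
  · rcases freeSplit hwY with ⟨E2, hY1, hY2⟩ | ⟨E2, hY1, hY2⟩ | ⟨E2, F2, hY1, hY2, hY3⟩ | ⟨E2, F2, hY1, hY2, hY3⟩ | ⟨E2, F2, G2, hY0, hY1, hY2, hY3, hY4⟩ | ⟨E2, F2, G2, hY0, hY1, hY2, hY3, hY4⟩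
    · exact key31 hlt hS hs ht hms hmt hX1 hX2 hX3 hY1 hY2
    · exact key32 hlt hS hs ht hms hmt hX1 hX2 hX3 hY1 hY2
    · exact key33 hlt hS hs ht hms hmt hX1 hX2 hX3 hY1 hY2 hY3
    · exact key34 hlt hS hs ht hms hmt hX1 hX2 hX3 hY1 hY2 hY3
    · exact key35 hlt hS hs ht hms hmt hX1 hX2 hX3 hY0 hY1 hY2 hY3 hY4
    · exact key36 hlt hS hs ht hms hmt hX1 hX2 hX3 hY0 hY1 hY2 hY3 hY4
  · rcases freeSplit hwY with ⟨E2, hY1, hY2⟩ | ⟨E2, hY1, hY2⟩ | ⟨E2, F2, hY1, hY2, hY3⟩ | ⟨E2, F2, hY1, hY2, hY3⟩ | ⟨E2, F2, G2, hY0, hY1, hY2, hY3, hY4⟩ | ⟨E2, F2, G2, hY0, hY1, hY2, hY3, hY4⟩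
    · exact TrivModR.swap hw (key32 hlt hS ht hs hmt hms hX1 hX2 hX3 hY1 hY2)
    · exact TrivModR.swap hw (key31 hlt hS ht hs hmt hms hX1 hX2 hX3 hY1 hY2)
    · exact TrivModR.swap hw (key34 hlt hS ht hs hmt hms hX1 hX2 hX3 hY1 hY2 hY3)
    · exact TrivModR.swap hw (key33 hlt hS ht hs hmt hms hX1 hX2 hX3 hY1 hY2 hY3)
    · exact TrivModR.swap hw (key36 hlt hS ht hs hmt hms hX1 hX2 hX3 hY0 hY1 hY2 hY3 hY4)
    · exact TrivModR.swap hw (key35 hlt hS ht hs hmt hms hX1 hX2 hX3 hY0 hY1 hY2 hY3 hY4)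
  · rcases freeSplit hwY with ⟨E2, hY1, hY2⟩ | ⟨E2, hY1, hY2⟩ | ⟨E2, F2, hY1, hY2, hY3⟩ | ⟨E2, F2, hY1, hY2, hY3⟩ | ⟨E2, F2, G2, hY0, hY1, hY2, hY3, hY4⟩ | ⟨E2, F2, G2, hY0, hY1, hY2, hY3, hY4⟩
    · exact key51 hlt hS hs ht hms hmt hX0 hX1 hX2 hX3 hX4 hY1 hY2
    · exact key52 hlt hS hs ht hms hmt hX0 hX1 hX2 hX3 hX4 hY1 hY2
    · exact key53 hlt hS hs ht hms hmt hX0 hX1 hX2 hX3 hX4 hY1 hY2 hY3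
    · exact key54 hlt hS hs ht hms hmt hX0 hX1 hX2 hX3 hX4 hY1 hY2 hY3
    · exact key55 hlt hS hs ht hms hmt hX0 hX1 hX2 hX3 hX4 hY0 hY1 hY2 hY3 hY4
    · exact key56 hlt hS hs ht hms hmt hX0 hX1 hX2 hX3 hX4 hY0 hY1 hY2 hY3 hY4
  · rcases freeSplit hwY with ⟨E2, hY1, hY2⟩ | ⟨E2, hY1, hY2⟩ | ⟨E2, F2, hY1, hY2, hY3⟩ | ⟨E2, F2, hY1, hY2, hY3⟩ | ⟨E2, F2, G2, hY0, hY1, hY2, hY3, hY4⟩ | ⟨E2, F2, G2, hY0, hY1, hY2, hY3, hY4⟩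
    · exact TrivModR.swap hw (key52 hlt hS ht hs hmt hms hX0 hX1 hX2 hX3 hX4 hY1 hY2)
    · exact TrivModR.swap hw (key51 hlt hS ht hs hmt hms hX0 hX1 hX2 hX3 hX4 hY1 hY2)
    · exact TrivModR.swap hw (key54 hlt hS ht hs hmt hms hX0 hX1 hX2 hX3 hX4 hY1 hY2 hY3)
    · exact TrivModR.swap hw (key53 hlt hS ht hs hmt hms hX0 hX1 hX2 hX3 hX4 hY1 hY2 hY3)
    · exact TrivModR.swap hw (key56 hlt hS ht hs hmt hms hX0 hX1 hX2 hX3 hX4 hY0 hY1 hY2 hY3 hY4)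
    · exact TrivModR.swap hw (key55 hlt hS ht hs hmt hms hX0 hX1 hX2 hX3 hX4 hY0 hY1 hY2 hY3 hY4)

end Key
section RepHelpers

variable {k : Type*} [CommRing k] {M : Type*} [Monoid M] {lt : M → M → Prop}

theorem rep_coeff_lt (hlt : MonOrd lt) {s : MonoidAlgebra k M} {m : M} (hm : IsLeadR lt s m)
    (a b : M) {w : M} (hw : lt (a * m * b) w) : (mono k a * s * mono k b).coeff w = 0 := by
  classical
  by_contra h0
  have hsup : w ∈ (mono k a * s * mono k b).coeff.support := Finsupp.mem_support_iff.2 h0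
  obtain ⟨v, hv, hw'⟩ := Finset.mem_image.1 (ctx_support a b s hsup)
  rcases eq_or_ne v m with rfl | hne
  · exact hlt.irr w (hw' ▸ hw)
  · have h1 := hlt.2.2 v m a b (hm.2 v hv hne)
    exact hlt.irr w (hlt.trans' (hw' ▸ h1) hw)

theorem supp_bound (hlt : MonOrd lt) {f : MonoidAlgebra k M} {n : ℕ} {α : Fin n → k}
    {a b : Fin n → M} {s : Fin n → MonoidAlgebra k M} {m : Fin n → M} {w : M}
    (hrep : f = ∑ i, α i • (mono k (a i) * s i * mono k (b i)))
    (hlead : ∀ i, IsLeadR lt (s i) (m i))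
    (hbound : ∀ i, a i * m i * b i = w ∨ lt (a i * m i * b i) w) :
    ∀ x ∈ f.coeff.support, x = w ∨ lt x w := by
  classical
  intro x hx
  rw [hrep, MonoidAlgebra.coeff_sum] at hx
  obtain ⟨i, _, hx'⟩ := Finset.mem_biUnion.1 (Finsupp.support_finset_sum hx)
  have hx2 : x ∈ (mono k (a i) * s i * mono k (b i)).coeff.support := by
    rw [MonoidAlgebra.coeff_smul] at hx'; exact Finsupp.support_smul hx'
  obtain ⟨v, hv, rfl⟩ := Finset.mem_image.1 (ctx_support (a i) (b i) (s i) hx2)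
  rcases eq_or_ne v (m i) with rfl | hne
  · exact hbound i
  · have h1 := hlt.2.2 v (m i) (a i) (b i) ((hlead i).2 v hv hne)
    rcases hbound i with he | hl
    · exact Or.inr (he ▸ h1)
    · exact Or.inr (hlt.trans' h1 hl)

theorem lead_coeff_one (hlt : MonOrd lt) {S : Set (MonoidAlgebra k M)}
    (hmon : ∀ s ∈ S, MonicR lt s) {s : MonoidAlgebra k M} (hs : s ∈ S) {m : M}
    (hm : IsLeadR lt s m) : s.coeff m = 1 := by
  obtain ⟨m', hm', h1⟩ := hmon s hs
  rwa [lead_unique hlt hm' hm] at h1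

theorem sum_swap_rep {n' : ℕ} (α : Fin (n' + 1) → k) (T : Fin (n' + 1) → MonoidAlgebra k M)
    (i₀ i₁ : Fin (n' + 1)) (hne : i₀ ≠ i₁) :
    ∑ i, α i • T i
      = (∑ j : Fin n', (if i₁.succAbove j = i₀ then α i₀ + α i₁ else α (i₁.succAbove j))
            • T (i₁.succAbove j)) + α i₁ • (T i₁ - T i₀) := by
  classical
  set at' : Fin (n' + 1) → k := fun i => if i = i₀ then α i₀ + α i₁ else α i with hat
  have h1 : ∑ i, at' i • T i = (∑ i, α i • T i) + α i₁ • T i₀ := by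
    have hterm : ∀ i ∈ Finset.univ, at' i • T i
        = α i • T i + (if i = i₀ then α i₁ • T i₀ else 0) := by
      intro i _
      by_cases hi : i = i₀
      · subst hi; simp [hat, add_smul]
      · simp [hat, hi]
    rw [Finset.sum_congr rfl hterm, Finset.sum_add_distrib,
      Finset.sum_ite_eq' Finset.univ i₀ (fun _ => α i₁ • T i₀), if_pos (Finset.mem_univ i₀)]
  have h2 := Fin.sum_univ_succAbove (fun i => at' i • T i) i₁
  have h3 : at' i₁ = α i₁ := if_neg (fun h => hne h.symm)
  have h4 : ∑ j : Fin n', at' (i₁.succAbove j) • T (i₁.succAbove j)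
      = (∑ i, α i • T i) + α i₁ • T i₀ - α i₁ • T i₁ := by
    rw [← h1, h2, h3]; abel
  show _ = (∑ j : Fin n', at' (i₁.succAbove j) • T (i₁.succAbove j)) + α i₁ • (T i₁ - T i₀)
  rw [h4, smul_sub]; abel

theorem fin_addCases_surj {m n : ℕ} (i : Fin (m + n)) :
    (∃ j : Fin m, i = Fin.castAdd n j) ∨ ∃ j : Fin n, i = Fin.natAdd m j := by
  by_cases h : (i : ℕ) < m
  · exact Or.inl ⟨⟨i, h⟩, Fin.ext rfl⟩
  · refine Or.inr ⟨⟨(i : ℕ) - m, by have := i.isLt; omega⟩, Fin.ext ?_⟩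
    simp only [Fin.natAdd]
    omega

end RepHelpers
section CD

variable {k X Y : Type*} [CommRing k] {lt : NW X Y → NW X Y → Prop}
  {S : Set (MonoidAlgebra k (NW X Y))}

theorem cd (hlt : MonOrd lt) (hS : IsGSB lt S) :
    ∀ w : NW X Y, ∀ cnt : ℕ, ∀ f : MonoidAlgebra k (NW X Y), f ≠ 0 →
      ∀ (n : ℕ) (α : Fin n → k) (a b : Fin n → NW X Y)
        (s : Fin n → MonoidAlgebra k (NW X Y)) (m : Fin n → NW X Y),
        (∀ i, s i ∈ S) →
        f = ∑ i, α i • (mono k (a i) * s i * mono k (b i)) →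
        (∀ i, IsLeadR lt (s i) (m i)) →
        (∀ i, a i * m i * b i = w ∨ lt (a i * m i * b i) w) →
        Nat.card {i // a i * m i * b i = w} ≤ cnt →
        ∀ mf, IsLeadR lt f mf →
          ∃ t ∈ S, ∃ mt, IsLeadR lt t mt ∧ ∃ cc dd : NW X Y, mf = cc * mt * dd := by
  intro w
  induction w using WellFounded.induction hlt.2.1 with
  | _ w IHw =>
  intro cnt
  induction cnt using Nat.strong_induction_on with
  | _ cnt IHc =>
  intro f hf n α a b s m hsS hrep hlead hbound hcard mf hmf
  classical
  by_cases h2 : ∃ i₀ i₁ : Fin n, i₀ ≠ i₁ ∧ a i₀ * m i₀ * b i₀ = w ∧ a i₁ * m i₁ * b i₁ = w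
  · -- two distinct maximal terms : key reduction
    obtain ⟨i₀, i₁, hne, hw0, hw1⟩ := h2
    obtain ⟨n', rfl⟩ : ∃ n', n = n' + 1 := ⟨n - 1, by have := Fin.pos i₀; omega⟩
    have hkey := (key hlt hS (hsS i₁) (hsS i₀) (hlead i₁) (hlead i₀)
      (hw1.trans hw0.symm)).smul (α i₁)
    rw [hw1] at hkey
    obtain ⟨n₂, β, A2, B2, s2, hs2, hEq2, hl2⟩ := hkey
    set m2 : Fin n₂ → NW X Y := fun j => Classical.choose (hl2 j) with hm2
    have hm2spec : ∀ j, IsLeadR lt (s2 j) (m2 j) ∧ lt (A2 j * m2 j * B2 j) w :=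
      fun j => Classical.choose_spec (hl2 j)
    set α' : Fin (n' + n₂) → k := Fin.addCases
      (fun j => if i₁.succAbove j = i₀ then α i₀ + α i₁ else α (i₁.succAbove j)) β with hα'
    set a' : Fin (n' + n₂) → NW X Y := Fin.addCases (fun j => a (i₁.succAbove j)) A2 with ha'
    set b' : Fin (n' + n₂) → NW X Y := Fin.addCases (fun j => b (i₁.succAbove j)) B2 with hb'
    set s' : Fin (n' + n₂) → MonoidAlgebra k (NW X Y) :=
      Fin.addCases (fun j => s (i₁.succAbove j)) s2 with hs'
    set m' : Fin (n' + n₂) → NW X Y := Fin.addCases (fun j => m (i₁.succAbove j)) m2 with hm'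
    have hrep' : f = ∑ i, α' i • (mono k (a' i) * s' i * mono k (b' i)) := by
      rw [Fin.sum_univ_add (fun i => α' i • (mono k (a' i) * s' i * mono k (b' i)))]
      simp only [hα', ha', hb', hs', Fin.addCases_left, Fin.addCases_right]
      rw [hrep, sum_swap_rep α (fun i => mono k (a i) * s i * mono k (b i)) i₀ i₁ hne]
      rw [hEq2]
    have hsS' : ∀ i, s' i ∈ S := by
      intro i
      rcases fin_addCases_surj i with ⟨j, rfl⟩ | ⟨j, rfl⟩
      · simp only [hs', Fin.addCases_left]; exact hsS _
      · simp only [hs', Fin.addCases_right]; exact hs2 j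
    have hlead' : ∀ i, IsLeadR lt (s' i) (m' i) := by
      intro i
      rcases fin_addCases_surj i with ⟨j, rfl⟩ | ⟨j, rfl⟩
      · simp only [hs', hm', Fin.addCases_left]; exact hlead _
      · simp only [hs', hm', Fin.addCases_right]; exact (hm2spec j).1
    have hbound' : ∀ i, a' i * m' i * b' i = w ∨ lt (a' i * m' i * b' i) w := by
      intro i
      rcases fin_addCases_surj i with ⟨j, rfl⟩ | ⟨j, rfl⟩
      · simp only [ha', hb', hm', Fin.addCases_left]; exact hbound _
      · simp only [ha', hb', hm', Fin.addCases_right]; exact Or.inr (hm2spec j).2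
    have hinj : ∀ p : {i : Fin (n' + n₂) // a' i * m' i * b' i = w},
        ∃ j : Fin n', p.1 = Fin.castAdd n₂ j := by
      intro p
      rcases fin_addCases_surj p.1 with h | ⟨j, hj⟩
      · exact h
      · exfalso
        have hp := p.2
        rw [hj] at hp
        simp only [ha', hb', hm', Fin.addCases_right] at hp
        exact hlt.irr w (hp ▸ (hm2spec j).2)
    have hψval : ∀ p : {i : Fin (n' + n₂) // a' i * m' i * b' i = w},
        a (i₁.succAbove (Classical.choose (hinj p))) * m (i₁.succAbove (Classical.choose (hinj p)))
          * b (i₁.succAbove (Classical.choose (hinj p))) = w := by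
      intro p
      have hj := Classical.choose_spec (hinj p)
      have hp := p.2
      rw [hj] at hp
      simpa only [ha', hb', hm', Fin.addCases_left] using hp
    have hlt_card : Nat.card {i : Fin (n' + n₂) // a' i * m' i * b' i = w}
        < Nat.card {i : Fin (n' + 1) // a i * m i * b i = w} := by
      rw [Nat.card_eq_fintype_card, Nat.card_eq_fintype_card]
      refine Fintype.card_lt_of_injective_of_notMem
        (fun p => ⟨i₁.succAbove (Classical.choose (hinj p)), hψval p⟩) ?_ (b := ⟨i₁, hw1⟩) ?_
      · intro p q hpq
        have h3 : i₁.succAbove (Classical.choose (hinj p))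
            = i₁.succAbove (Classical.choose (hinj q)) := congrArg Subtype.val hpq
        have h4 := Fin.succAbove_right_injective (p := i₁) h3
        apply Subtype.ext
        rw [Classical.choose_spec (hinj p), Classical.choose_spec (hinj q), h4]
      · rintro ⟨p, hp⟩
        exact Fin.succAbove_ne i₁ _ (congrArg Subtype.val hp)
    exact IHc _ (lt_of_lt_of_le hlt_card hcard) f hf (n' + n₂) α' a' b' s' m'
      hsS' hrep' hlead' hbound' (le_refl _) mf hmf
  · by_cases h1 : ∃ i₀ : Fin n, a i₀ * m i₀ * b i₀ = w
    · -- exactly one maximal term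
      obtain ⟨i₀, hw0⟩ := h1
      have huniq : ∀ i, a i * m i * b i = w → i = i₀ := by
        intro i hi
        by_contra hnei
        exact h2 ⟨i, i₀, hnei, hi, hw0⟩
      by_cases hα : α i₀ = 0
      · obtain ⟨n', rfl⟩ : ∃ n', n = n' + 1 := ⟨n - 1, by have := Fin.pos i₀; omega⟩
        have hrep' : f = ∑ j : Fin n', α (i₀.succAbove j) •
            (mono k (a (i₀.succAbove j)) * s (i₀.succAbove j) * mono k (b (i₀.succAbove j))) := by
          rw [hrep, Fin.sum_univ_succAbove
            (fun i => α i • (mono k (a i) * s i * mono k (b i))) i₀, hα, zero_smul, zero_add]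
        have hcard0 : Nat.card {j : Fin n' //
            a (i₀.succAbove j) * m (i₀.succAbove j) * b (i₀.succAbove j) = w} ≤ 0 := by
          haveI : IsEmpty {j : Fin n' //
              a (i₀.succAbove j) * m (i₀.succAbove j) * b (i₀.succAbove j) = w} :=
            ⟨fun p => (Fin.succAbove_ne i₀ p.1) (huniq _ p.2)⟩
          exact le_of_eq Nat.card_of_isEmpty
        have hcpos : 0 < cnt := by
          haveI : Nonempty {i : Fin (n' + 1) // a i * m i * b i = w} := ⟨⟨i₀, hw0⟩⟩
          exact lt_of_lt_of_le Nat.card_pos hcard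
        exact IHc 0 hcpos f hf n' _ _ _ _ _ (fun j => hsS _) hrep' (fun j => hlead _)
          (fun j => hbound _) hcard0 mf hmf
      · have hfw : f.coeff w = α i₀ := by
          rw [hrep, MonoidAlgebra.coeff_sum, Finsupp.finset_sum_apply]
          rw [Finset.sum_eq_single i₀ (fun i _ hnei => ?_) (fun h => absurd (Finset.mem_univ i₀) h)]
          · rw [MonoidAlgebra.coeff_smul_apply, ← hw0, ctx_apply (nw_ctx_inj _ _),
              lead_coeff_one hlt hS.1 (hsS i₀) (hlead i₀), smul_eq_mul, mul_one]
          · have hlti : lt (a i * m i * b i) w := by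
              rcases hbound i with he | hl
              · exact absurd (huniq i he) hnei
              · exact hl
            rw [MonoidAlgebra.coeff_smul_apply, rep_coeff_lt hlt (hlead i) _ _ hlti, smul_zero]
        have hwsupp : w ∈ f.coeff.support := Finsupp.mem_support_iff.2 (by rw [hfw]; exact hα)
        have hmfw : mf = w := by
          rcases supp_bound hlt hrep hlead hbound mf hmf.1 with he | hl
          · exact he
          · have hnew : w ≠ mf := fun he => hlt.irr w (he ▸ hl)
            exact (hlt.asym hl (hmf.2 w hwsupp hnew)).elim
        exact ⟨s i₀, hsS i₀, m i₀, hlead i₀, a i₀, b i₀, by rw [hmfw, ← hw0]⟩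
    · -- no maximal term : strictly smaller max word
      rcases Nat.eq_zero_or_pos n with rfl | hn
      · exact absurd (by simpa using hrep) hf
      obtain ⟨n', rfl⟩ : ∃ n', n = n' + 1 := ⟨n - 1, by omega⟩
      obtain ⟨i₀, hmax⟩ := exists_max hlt (fun i => a i * m i * b i)
      have hw0 : lt (a i₀ * m i₀ * b i₀) w := by
        rcases hbound i₀ with he | hl
        · exact absurd ⟨i₀, he⟩ h1
        · exact hl
      exact IHw _ hw0 (n' + 1) f hf (n' + 1) α a b s m hsS hrep hlead hmax
        (by
          have hcle := Nat.card_le_card_of_injective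
            (α := {i : Fin (n' + 1) // a i * m i * b i = a i₀ * m i₀ * b i₀})
            (β := Fin (n' + 1)) Subtype.val Subtype.val_injective
          simpa using hcle)
        mf hmf

end CD
section Final

theorem succAbove_one_val {n' : ℕ} (h1 : 1 < n' + 1) (j : Fin n') :
    (((⟨1, h1⟩ : Fin (n' + 1)).succAbove j : ℕ))
      = if (j : ℕ) < 1 then (j : ℕ) else (j : ℕ) + 1 := by
  rw [Fin.succAbove]
  by_cases hj : (j : ℕ) < 1
  · rw [if_pos (show j.castSucc < ⟨1, h1⟩ from by simpa [Fin.lt_def] using hj), if_pos hj]; rfl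
  · rw [if_neg (show ¬j.castSucc < ⟨1, h1⟩ from by simpa [Fin.lt_def] using hj), if_neg hj]; rfl

end Final
/-- the key induction step in the proof of the Composition-Diamond lemma.
If a nonzero `f ∈ Id(S)` is written as `Σ αᵢ aᵢsᵢbᵢ` where the maximal words
`w = aᵢs̄ᵢbᵢ` are attained exactly for the first `l ≥ 2` indices, and `S` is a
Gröbner–Shirshov basis, then `f` admits another such representation in which either the
number of maximal terms decreases (with the same `w`) or the maximal word decreases;
consequently `f̄ = a·s̄·b` for some `s ∈ S`. -/
theorem stmt_17 {k X Y : Type*} [Field k]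
    (lt : NW X Y → NW X Y → Prop) (hlt : MonOrd lt)
    (S : Set (MonoidAlgebra k (NW X Y))) (hS : IsGSB lt S)
    (f : MonoidAlgebra k (NW X Y)) (hf : f ≠ 0)
    (n : ℕ) (α : Fin n → k) (a b : Fin n → NW X Y)
    (s : Fin n → MonoidAlgebra k (NW X Y)) (hs : ∀ i, s i ∈ S)
    (hrep : f = ∑ i, α i • (mono k (a i) * s i * mono k (b i)))
    (m : Fin n → NW X Y) (hm : ∀ i, IsLeadR lt (s i) (m i))
    (w : NW X Y) (l : ℕ) (hl : 2 ≤ l) (hln : l ≤ n)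
    (hmax : ∀ i : Fin n, (i : ℕ) < l → a i * m i * b i = w)
    (hrest : ∀ i : Fin n, l ≤ (i : ℕ) → lt (a i * m i * b i) w) :
    (∃ (n' : ℕ) (α' : Fin n' → k) (a' b' : Fin n' → NW X Y)
       (s' : Fin n' → MonoidAlgebra k (NW X Y)) (m' : Fin n' → NW X Y)
       (w' : NW X Y) (l' : ℕ),
       (∀ i, s' i ∈ S) ∧
       f = ∑ i, α' i • (mono k (a' i) * s' i * mono k (b' i)) ∧
       (∀ i, IsLeadR lt (s' i) (m' i)) ∧
       l' ≤ n' ∧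
       (∀ i : Fin n', (i : ℕ) < l' → a' i * m' i * b' i = w') ∧
       (∀ i : Fin n', l' ≤ (i : ℕ) → lt (a' i * m' i * b' i) w') ∧
       ((w' = w ∧ l' < l) ∨ lt w' w)) ∧
    (∀ mf : NW X Y, IsLeadR lt f mf →
      ∃ t ∈ S, ∃ mt : NW X Y, IsLeadR lt t mt ∧ ∃ c d : NW X Y, mf = c * mt * d) := by

  constructor
  · -- improvement step
    classical
    have h2n : 2 ≤ n := le_trans hl hln
    obtain ⟨n', rfl⟩ : ∃ n', n = n' + 1 := ⟨n - 1, by omega⟩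
    have h1lt : 1 < n' + 1 := by omega
    have h0lt : 0 < n' + 1 := by omega
    set i₀ : Fin (n' + 1) := ⟨0, h0lt⟩ with hi₀
    set i₁ : Fin (n' + 1) := ⟨1, h1lt⟩ with hi₁
    have hne : i₀ ≠ i₁ := by
      intro h
      have := congrArg Fin.val h
      simp [hi₀, hi₁] at this
    have hw0 : a i₀ * m i₀ * b i₀ = w := hmax i₀ (by simp [hi₀]; omega)
    have hw1 : a i₁ * m i₁ * b i₁ = w := hmax i₁ (by simp [hi₁]; omega)
    have hkey := (key hlt hS (hs i₁) (hs i₀) (hm i₁) (hm i₀) (hw1.trans hw0.symm)).smul (α i₁)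
    rw [hw1] at hkey
    obtain ⟨n₂, β, A2, B2, s2, hs2, hEq2, hl2⟩ := hkey
    set m2 : Fin n₂ → NW X Y := fun j => Classical.choose (hl2 j) with hm2
    have hm2spec : ∀ j, IsLeadR lt (s2 j) (m2 j) ∧ lt (A2 j * m2 j * B2 j) w :=
      fun j => Classical.choose_spec (hl2 j)
    set α' : Fin (n' + n₂) → k := Fin.addCases
      (fun j => if i₁.succAbove j = i₀ then α i₀ + α i₁ else α (i₁.succAbove j)) β with hα'
    set a' : Fin (n' + n₂) → NW X Y := Fin.addCases (fun j => a (i₁.succAbove j)) A2 with ha'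
    set b' : Fin (n' + n₂) → NW X Y := Fin.addCases (fun j => b (i₁.succAbove j)) B2 with hb'
    set s' : Fin (n' + n₂) → MonoidAlgebra k (NW X Y) :=
      Fin.addCases (fun j => s (i₁.succAbove j)) s2 with hs'
    set m' : Fin (n' + n₂) → NW X Y := Fin.addCases (fun j => m (i₁.succAbove j)) m2 with hm'
    have hrep' : f = ∑ i, α' i • (mono k (a' i) * s' i * mono k (b' i)) := by
      rw [Fin.sum_univ_add (fun i => α' i • (mono k (a' i) * s' i * mono k (b' i)))]
      simp only [hα', ha', hb', hs', Fin.addCases_left, Fin.addCases_right]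
      rw [hrep, sum_swap_rep α (fun i => mono k (a i) * s i * mono k (b i)) i₀ i₁ hne]
      rw [hEq2]
    have hsS' : ∀ i, s' i ∈ S := by
      intro i
      rcases fin_addCases_surj i with ⟨j, rfl⟩ | ⟨j, rfl⟩
      · simp only [hs', Fin.addCases_left]; exact hs _
      · simp only [hs', Fin.addCases_right]; exact hs2 j
    have hlead' : ∀ i, IsLeadR lt (s' i) (m' i) := by
      intro i
      rcases fin_addCases_surj i with ⟨j, rfl⟩ | ⟨j, rfl⟩
      · simp only [hs', hm', Fin.addCases_left]; exact hm _
      · simp only [hs', hm', Fin.addCases_right]; exact (hm2spec j).1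
    refine ⟨n' + n₂, α', a', b', s', m', w, l - 1, hsS', hrep', hlead', by omega, ?_, ?_,
      Or.inl ⟨rfl, by omega⟩⟩
    · intro i hi
      have hiL : ∃ j : Fin n', i = Fin.castAdd n₂ j := by
        rcases fin_addCases_surj i with h | ⟨j, rfl⟩
        · exact h
        · exfalso
          have hv : (Fin.natAdd n' j : ℕ) = n' + (j : ℕ) := rfl
          omega
      obtain ⟨j, rfl⟩ := hiL
      simp only [ha', hb', hm', Fin.addCases_left]
      apply hmax
      have hsa := succAbove_one_val h1lt j
      have hjv : ((Fin.castAdd n₂ j : ℕ)) = (j : ℕ) := rfl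
      rw [hi₁] at *
      by_cases hj : (j : ℕ) < 1
      · rw [hsa, if_pos hj]; omega
      · rw [hsa, if_neg hj]; omega
    · intro i hi
      rcases fin_addCases_surj i with ⟨j, rfl⟩ | ⟨j, rfl⟩
      · simp only [ha', hb', hm', Fin.addCases_left]
        apply hrest
        have hsa := succAbove_one_val h1lt j
        have hjv : ((Fin.castAdd n₂ j : ℕ)) = (j : ℕ) := rfl
        rw [hi₁] at *
        rw [hsa, if_neg (by omega)]
        omega
      · simp only [ha', hb', hm', Fin.addCases_right]
        exact (hm2spec j).2
  · -- consequence : the leading word of f factors through a leading word of S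
    intro mf hmf
    refine cd hlt hS w n f hf n α a b s m hs hrep hm ?_ ?_ mf hmf
    · intro i
      by_cases hi : (i : ℕ) < l
      · exact Or.inl (hmax i hi)
      · exact Or.inr (hrest i (by omega))
    · have hcle := Nat.card_le_card_of_injective
        (α := {i : Fin n // a i * m i * b i = w}) (β := Fin n)
        Subtype.val Subtype.val_injective
      simpa using hcle
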